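/- arXiv:1211.0768 — 4 statements merged into one kernel-verified Lean document; each statement's English description precedes it below -/
import Mathlib

section
/- (Invariance of the leaves through the origin.) Under the stated assumptions, the sets M₀ and N₀ are invariant under the flow: if z₀ ∈ M₀ then z(s, z₀) ∈ M₀ for all s ∈ ℝ, and if z₀ ∈ N₀ then z(s, z₀) ∈ N₀ for all s ∈ ℝ. -/
open MeasureTheory

open intervalIntegral Set Filter

noncomputable section


lemma var_const {E : Type*} [NormedAddCommGroup E] [NormedSpace ℝ E] [CompleteSpace E]
    (A : E →L[ℝ] E) (x : ℝ → E) (f : ℝ → E) (hf : Continuous f)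
    (hx : ∀ t, HasDerivAt x (A (x t) + f t) t) (s t : ℝ) :
    x t = NormedSpace.exp ((t-s) • A) (x s)
      + ∫ u in s..t, NormedSpace.exp ((t-u) • A) (f u) := by
  have hM : ∀ u : ℝ, HasDerivAt (fun u => NormedSpace.exp ((t-u) • A))
      (-(NormedSpace.exp ((t-u) • A) * A)) u := by
    intro u
    have h1 : HasDerivAt (fun v : ℝ => NormedSpace.exp (v • A))
        (NormedSpace.exp ((t-u) • A) * A) (t - u) := hasDerivAt_exp_smul_const A (t-u)
    have h2 : HasDerivAt (fun v : ℝ => t - v) (-1) u := by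
      exact (hasDerivAt_id' u).const_sub t
    have := h1.scomp u h2
    simpa [neg_smul, Function.comp_def] using this
  have key : ∀ u : ℝ, HasDerivAt (fun u => NormedSpace.exp ((t-u) • A) (x u))
      (NormedSpace.exp ((t-u) • A) (f u)) u := by
    intro u
    have := (hM u).clm_apply (hx u)
    simpa [ContinuousLinearMap.mul_apply, add_comm] using this
  have hcontM : Continuous fun u : ℝ => NormedSpace.exp ((t-u) • A) :=
    continuous_iff_continuousAt.2 fun u => (hM u).continuousAt
  have hint : IntervalIntegrable (fun u => NormedSpace.exp ((t-u) • A) (f u))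
      volume s t := (hcontM.clm_apply hf).intervalIntegrable s t
  have := integral_eq_sub_of_hasDerivAt (f := fun u => NormedSpace.exp ((t-u) • A) (x u))
    (fun u _ => key u) hint
  rw [this]
  simp [NormedSpace.exp_zero]

lemma exp_int (p q a b : ℝ) (hp : p ≠ 0) :
    ∫ u in a..b, Real.exp (p*u+q) = (Real.exp (p*b+q) - Real.exp (p*a+q))/p := by
  have h : ∀ u : ℝ, HasDerivAt (fun u => Real.exp (p*u+q)/p) (Real.exp (p*u+q)) u := by
    intro u
    have h1 : HasDerivAt (fun u : ℝ => p*u+q) p u := by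
      simpa using ((hasDerivAt_id u).const_mul p).add_const q
    have := (Real.hasDerivAt_exp (p*u+q)).comp u h1
    have h2 := this.div_const p
    simpa [mul_comm, mul_div_assoc, mul_div_cancel_left₀ _ hp] using h2
  rw [integral_eq_sub_of_hasDerivAt (fun u _ => h u)
    ((Real.continuous_exp.comp (by continuity)).intervalIntegrable a b)]
  ring

lemma cont_ind {φ B : ℝ → ℝ} (hφ : Continuous φ) (hB : Continuous B) {s : ℝ}
    (hbase : φ s < B s)
    (hstep : ∀ t, s < t → (∀ u ∈ Icc s t, φ u ≤ B u) → φ t < B t) :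
    ∀ t, s ≤ t → φ t ≤ B t := by
  by_contra hcon
  push_neg at hcon
  obtain ⟨t₁, ht₁s, ht₁⟩ := hcon
  set E : Set ℝ := {t | s ≤ t ∧ B t < φ t} with hE
  have hne : E.Nonempty := ⟨t₁, ht₁s, ht₁⟩
  have hbdd : BddBelow E := ⟨s, fun t ht => ht.1⟩
  set T := sInf E with hT
  have hTcl : T ∈ closure E := csInf_mem_closure hne hbdd
  have hTs : s ≤ T := le_csInf hne fun t ht => ht.1
  have hqT : B T ≤ φ T := by
    have h1 : closure E ⊆ {t | B t ≤ φ t} :=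
      closure_minimal (fun t ht => le_of_lt ht.2) (isClosed_le hB hφ)
    exact h1 hTcl
  have hsT : s < T := by
    rcases eq_or_lt_of_le hTs with h | h
    · exact absurd hqT (by rw [← h]; exact not_le.2 hbase)
    · exact h
  have hIco : ∀ u ∈ Ico s T, φ u ≤ B u := by
    intro u hu
    by_contra hc
    exact absurd (csInf_le hbdd ⟨hu.1, not_le.1 hc⟩) (not_le.2 hu.2)
  have hIcc : ∀ u ∈ Icc s T, φ u ≤ B u := by
    intro u hu
    rcases eq_or_lt_of_le hu.2 with h | h
    · have hcl : T ∈ closure (Ico s T) := by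
        rw [closure_Ico hsT.ne]; exact ⟨hTs, le_refl T⟩
      have hsub : closure (Ico s T) ⊆ {t | φ t ≤ B t} :=
        closure_minimal hIco (isClosed_le hφ hB)
      rw [h]; exact hsub hcl
    · exact hIco u ⟨hu.1, h⟩
  exact absurd (hstep T hsT hIcc) (not_lt.2 hqT)

set_option maxHeartbeats 1000000 in
lemma main_aux {X Y : Type*} [NormedAddCommGroup X] [NormedSpace ℝ X] [CompleteSpace X]
    [NormedAddCommGroup Y] [NormedSpace ℝ Y] [CompleteSpace Y]
    (A : X →L[ℝ] X) (B : Y →L[ℝ] Y) (α β δ : ℝ)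
    (F : X × Y → X) (G : X × Y → Y) (z : ℝ → X × Y → X × Y)
    (hA : ∀ t : ℝ, 0 ≤ t → ‖NormedSpace.exp (t • A)‖ ≤ Real.exp (α * t))
    (hB : ∀ t : ℝ, 0 ≤ t → ‖NormedSpace.exp ((-t) • B)‖ ≤ Real.exp (-(β * t)))
    (hδ : 0 ≤ δ)
    (hLip : ∀ w₁ w₂ : X × Y, ‖((F w₁, G w₁) : X × Y) - (F w₂, G w₂)‖ ≤ δ * ‖w₁ - w₂‖)
    (hH0 : ((F 0, G 0) : X × Y) = 0)
    (hgap : 2 * δ < β - α)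
    (hode : ∀ (z₀ : X × Y) (t : ℝ),
      HasDerivAt (fun τ => z τ z₀)
        (((A (z t z₀).1, B (z t z₀).2) : X × Y) + (F (z t z₀), G (z t z₀))) t)
    (z₀ : X × Y)
    (hyp : ∀ t : ℝ, 0 ≤ t → ‖z t z₀‖ ≤ ‖z₀‖ * Real.exp ((α + δ) * t))
    (s t : ℝ) (ht : 0 ≤ t) :
    ‖z (t + s) z₀‖ ≤ ‖z s z₀‖ * Real.exp ((α + δ) * t) := by
  have hβαδ : δ < β - α - δ := by linarith
  have hden : 0 < β - α - δ := lt_of_le_of_lt hδ hβαδ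
  set ρ : ℝ := δ / (β - α - δ) with hρdef
  have hρ0 : 0 ≤ ρ := div_nonneg hδ hden.le
  have hρ1 : ρ < 1 := (div_lt_one hden).2 hβαδ
  set u : ℝ → X × Y := fun τ => z τ z₀ with hu_def
  have hu : ∀ τ : ℝ, HasDerivAt u
      (((A (u τ).1, B (u τ).2) : X × Y) + (F (u τ), G (u τ))) τ := hode z₀
  have hucont : Continuous u := continuous_iff_continuousAt.2 fun τ => (hu τ).continuousAt
  have hx : ∀ τ, HasDerivAt (fun τ => (u τ).1) (A (u τ).1 + F (u τ)) τ := by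
    intro τ
    have := (ContinuousLinearMap.fst ℝ X Y).hasFDerivAt.comp_hasDerivAt τ (hu τ)
    simpa [Function.comp_def] using this
  have hy : ∀ τ, HasDerivAt (fun τ => (u τ).2) (B (u τ).2 + G (u τ)) τ := by
    intro τ
    have := (ContinuousLinearMap.snd ℝ X Y).hasFDerivAt.comp_hasDerivAt τ (hu τ)
    simpa [Function.comp_def] using this
  have hHnorm : ∀ w : X × Y, ‖(((F w, G w)) : X × Y)‖ ≤ δ * ‖w‖ := by
    intro w
    calc ‖((F w, G w) : X × Y)‖ = ‖((F w, G w) : X × Y) - (F 0, G 0)‖ := by rw [hH0, sub_zero]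
      _ ≤ δ * ‖w - 0‖ := hLip w 0
      _ = δ * ‖w‖ := by rw [sub_zero]
  have hFnorm : ∀ w : X × Y, ‖F w‖ ≤ δ * ‖w‖ :=
    fun w => le_trans (norm_fst_le ((F w, G w) : X × Y)) (hHnorm w)
  have hGnorm : ∀ w : X × Y, ‖G w‖ ≤ δ * ‖w‖ :=
    fun w => le_trans (norm_snd_le ((F w, G w) : X × Y)) (hHnorm w)
  have hFcont : Continuous fun τ => F (u τ) := by
    have : LipschitzWith (Real.toNNReal δ) F := by
      apply LipschitzWith.of_dist_le_mul
      intro a b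
      have h1 : ‖F a - F b‖ ≤ δ * ‖a - b‖ :=
        le_trans (norm_fst_le (((F a, G a) : X × Y) - (F b, G b))) (hLip a b)
      simpa [dist_eq_norm, Real.coe_toNNReal δ hδ] using h1
    exact this.continuous.comp hucont
  have hGcont : Continuous fun τ => G (u τ) := by
    have : LipschitzWith (Real.toNNReal δ) G := by
      apply LipschitzWith.of_dist_le_mul
      intro a b
      have h1 : ‖G a - G b‖ ≤ δ * ‖a - b‖ :=
        le_trans (norm_snd_le (((F a, G a) : X × Y) - (F b, G b))) (hLip a b)
      simpa [dist_eq_norm, Real.coe_toNNReal δ hδ] using h1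
    exact this.continuous.comp hucont
  have hVOCx : ∀ s' t' : ℝ, (u t').1 = NormedSpace.exp ((t'-s') • A) ((u s').1)
      + ∫ v in s'..t', NormedSpace.exp ((t'-v) • A) (F (u v)) :=
    fun s' t' => var_const A (fun τ => (u τ).1) (fun τ => F (u τ)) hFcont hx s' t'
  have hVOCy : ∀ s' t' : ℝ, (u t').2 = NormedSpace.exp ((t'-s') • B) ((u s').2)
      + ∫ v in s'..t', NormedSpace.exp ((t'-v) • B) (G (u v)) :=
    fun s' t' => var_const B (fun τ => (u τ).2) (fun τ => G (u τ)) hGcont hy s' t'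
  have hAnorm : ∀ a b : ℝ, b ≤ a →
      ‖NormedSpace.exp ((a-b) • A)‖ ≤ Real.exp (α*(a-b)) :=
    fun a b h => hA _ (by linarith)
  have hBnorm : ∀ a b : ℝ, b ≤ a →
      ‖NormedSpace.exp ((b-a) • B)‖ ≤ Real.exp (-(β*(a-b))) := by
    intro a b h
    have := hB (a-b) (by linarith)
    rwa [neg_sub] at this
  -- the quantity m
  set ψ : ℝ → ℝ := fun τ => Real.exp (-((α+δ)*(τ-s))) * ‖u τ‖ with hψdef
  have hψcont : Continuous ψ := by
    apply Continuous.mul ?_ hucont.norm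
    fun_prop
  have hψnn : ∀ τ, 0 ≤ ψ τ := fun τ => mul_nonneg (Real.exp_pos _).le (norm_nonneg _)
  have hψbd : ∃ M, ∀ τ ∈ Ici s, ψ τ ≤ M := by
    obtain ⟨τ₀, hτ₀mem, hmax⟩ :=
      (isCompact_Icc (a := s) (b := max s 0)).exists_isMaxOn
        ⟨s, le_refl s, le_max_left s 0⟩ hψcont.continuousOn
    refine ⟨max (ψ τ₀) (‖z₀‖ * Real.exp ((α+δ)*s)), fun τ hτ => ?_⟩
    rcases le_total τ (max s 0) with h | h
    · exact le_max_of_le_left (hmax ⟨hτ, h⟩)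
    · have hτ0 : (0:ℝ) ≤ τ := le_trans (le_max_right s 0) h
      refine le_max_of_le_right ?_
      calc ψ τ ≤ Real.exp (-((α+δ)*(τ-s))) * (‖z₀‖ * Real.exp ((α+δ)*τ)) := by
            exact mul_le_mul_of_nonneg_left (hyp τ hτ0) (Real.exp_pos _).le
        _ = ‖z₀‖ * Real.exp ((α+δ)*s) := by
            have hq : Real.exp (-((α+δ)*(τ-s))) * Real.exp ((α+δ)*τ)
                = Real.exp ((α+δ)*s) := by
              rw [← Real.exp_add]; congr 1; ring
            linear_combination ‖z₀‖ * hq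
  obtain ⟨M, hM⟩ := hψbd
  have hSne : (ψ '' Ici s).Nonempty := ⟨ψ s, s, le_refl s, rfl⟩
  have hSbdd : BddAbove (ψ '' Ici s) := ⟨M, fun y hy => by
    obtain ⟨τ, hτ, rfl⟩ := hy; exact hM τ hτ⟩
  set m : ℝ := sSup (ψ '' Ici s) with hmdef
  have hm1 : ∀ τ, s ≤ τ → ψ τ ≤ m := fun τ h => le_csSup hSbdd ⟨τ, h, rfl⟩
  have hmnn : 0 ≤ m := le_trans (hψnn s) (hm1 s le_rfl)
  have humle : ∀ τ, s ≤ τ → ‖u τ‖ ≤ m * Real.exp ((α+δ)*(τ-s)) := by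
    intro τ h
    have h2 := mul_le_mul_of_nonneg_left (hm1 τ h) (Real.exp_pos ((α+δ)*(τ-s))).le
    calc ‖u τ‖ = Real.exp ((α+δ)*(τ-s)) * ψ τ := by
          have hq : Real.exp ((α+δ)*(τ-s)) * Real.exp (-((α+δ)*(τ-s))) = 1 := by
            rw [← Real.exp_add]; simp
          show ‖u τ‖ = Real.exp ((α+δ)*(τ-s)) * (Real.exp (-((α+δ)*(τ-s))) * ‖u τ‖)
          linear_combination (1 - hq) * ‖u τ‖
      _ ≤ Real.exp ((α+δ)*(τ-s)) * m := h2
      _ = m * Real.exp ((α+δ)*(τ-s)) := mul_comm _ _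
  -- Step 1: bound on the y-component
  have hyb : ∀ t₀, s ≤ t₀ → ‖(u t₀).2‖ ≤ ρ * m * Real.exp ((α+δ)*(t₀-s)) := by
    intro t₀ ht₀
    set p : ℝ := α + δ - β with hpdef
    have hpneg : p < 0 := by rw [hpdef]; linarith
    have key : ∀ T, t₀ ≤ T → ‖(u t₀).2‖ ≤
        m * Real.exp ((α+δ)*(t₀-s)) * Real.exp (p*(T-t₀))
        + δ * m * Real.exp ((α+δ)*(t₀-s)) * ((1 - Real.exp (p*(T-t₀)))/(β-α-δ)) := by
      intro T hT
      have hvoc := hVOCy T t₀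
      rw [hvoc]
      refine le_trans (norm_add_le _ _) (add_le_add ?_ ?_)
      · calc ‖NormedSpace.exp ((t₀-T) • B) ((u T).2)‖
            ≤ ‖NormedSpace.exp ((t₀-T) • B)‖ * ‖(u T).2‖ :=
              ContinuousLinearMap.le_opNorm _ _
          _ ≤ Real.exp (-(β*(T-t₀))) * (m * Real.exp ((α+δ)*(T-s))) := by
              apply mul_le_mul (hBnorm T t₀ hT)
                (le_trans (norm_snd_le _) (humle T (le_trans ht₀ hT)))
                (norm_nonneg _) (Real.exp_pos _).le
          _ = m * Real.exp ((α+δ)*(t₀-s)) * Real.exp (p*(T-t₀)) := by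
              have hq : Real.exp (-(β*(T-t₀))) * Real.exp ((α+δ)*(T-s))
                  = Real.exp ((α+δ)*(t₀-s)) * Real.exp (p*(T-t₀)) := by
                rw [← Real.exp_add, ← Real.exp_add, hpdef]; ring_nf
              linear_combination m * hq
      · have hsymm : (∫ v in T..t₀, NormedSpace.exp ((t₀-v) • B) (G (u v)))
            = -(∫ v in t₀..T, NormedSpace.exp ((t₀-v) • B) (G (u v))) :=
          integral_symm t₀ T
        rw [hsymm, norm_neg]
        have hptw : ∀ v ∈ Icc t₀ T, ‖NormedSpace.exp ((t₀-v) • B) (G (u v))‖ ≤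
            δ * m * Real.exp ((α+δ)*(t₀-s)) * Real.exp (p*v + (-(p*t₀))) := by
          intro v hv
          calc ‖NormedSpace.exp ((t₀-v) • B) (G (u v))‖
              ≤ ‖NormedSpace.exp ((t₀-v) • B)‖ * ‖G (u v)‖ :=
                ContinuousLinearMap.le_opNorm _ _
            _ ≤ Real.exp (-(β*(v-t₀))) * (δ * (m * Real.exp ((α+δ)*(v-s)))) := by
                apply mul_le_mul (hBnorm v t₀ hv.1)
                  (le_trans (hGnorm (u v)) (mul_le_mul_of_nonneg_left
                    (humle v (le_trans ht₀ hv.1)) hδ))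
                  (norm_nonneg _) (Real.exp_pos _).le
            _ = δ * m * Real.exp ((α+δ)*(t₀-s)) * Real.exp (p*v + (-(p*t₀))) := by
                have hq : Real.exp (-(β*(v-t₀))) * Real.exp ((α+δ)*(v-s))
                    = Real.exp ((α+δ)*(t₀-s)) * Real.exp (p*v + (-(p*t₀))) := by
                  rw [← Real.exp_add, ← Real.exp_add, hpdef]; ring_nf
                linear_combination δ * m * hq
        have hInt1 : IntervalIntegrable
            (fun v => ‖NormedSpace.exp ((t₀-v) • B) (G (u v))‖) volume t₀ T := by
          apply Continuous.intervalIntegrable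
          apply Continuous.norm
          exact (continuous_iff_continuousAt.2 fun v =>
            (HasDerivAt.continuousAt (by
              have h1 : HasDerivAt (fun w : ℝ => NormedSpace.exp (w • B))
                  (NormedSpace.exp ((t₀-v) • B) * B) (t₀ - v) :=
                hasDerivAt_exp_smul_const B (t₀-v)
              have h2 : HasDerivAt (fun w : ℝ => t₀ - w) (-1) v := by
                exact (hasDerivAt_id' v).const_sub t₀
              exact h1.scomp v h2))).clm_apply hGcont
        have hInt2 : IntervalIntegrable
            (fun v => δ * m * Real.exp ((α+δ)*(t₀-s)) * Real.exp (p*v + (-(p*t₀))) : ℝ → ℝ)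
            volume t₀ T := by
          apply Continuous.intervalIntegrable
          fun_prop
        calc ‖∫ v in t₀..T, NormedSpace.exp ((t₀-v) • B) (G (u v))‖
            ≤ ∫ v in t₀..T, ‖NormedSpace.exp ((t₀-v) • B) (G (u v))‖ :=
              norm_integral_le_integral_norm hT
          _ ≤ ∫ v in t₀..T, δ * m * Real.exp ((α+δ)*(t₀-s)) * Real.exp (p*v + (-(p*t₀))) :=
              integral_mono_on hT hInt1 hInt2 hptw
          _ = δ * m * Real.exp ((α+δ)*(t₀-s)) * ((1 - Real.exp (p*(T-t₀)))/(β-α-δ)) := by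
              rw [intervalIntegral.integral_const_mul, exp_int p (-(p*t₀)) t₀ T hpneg.ne]
              have h1 : Real.exp (p*T + (-(p*t₀))) = Real.exp (p*(T-t₀)) := by
                congr 1; ring
              have h0 : Real.exp (p*t₀ + (-(p*t₀))) = 1 := by
                rw [add_neg_cancel, Real.exp_zero]
              rw [h1, h0]
              have hfrac : (Real.exp (p*(T-t₀)) - 1)/p
                  = (1 - Real.exp (p*(T-t₀)))/(β-α-δ) := by
                rw [div_eq_div_iff hpneg.ne hden.ne', hpdef]; ring
              rw [hfrac]
    have he : Tendsto (fun T : ℝ => Real.exp (p*(T-t₀))) atTop (nhds 0) := by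
      apply Real.tendsto_exp_atBot.comp
      have hlin : Tendsto (fun T : ℝ => T - t₀) atTop atTop :=
        tendsto_atTop_add_const_right _ _ tendsto_id
      exact (tendsto_const_mul_atBot_of_neg hpneg).2 hlin
    have hlim : Tendsto (fun T : ℝ =>
        m * Real.exp ((α+δ)*(t₀-s)) * Real.exp (p*(T-t₀))
        + δ * m * Real.exp ((α+δ)*(t₀-s)) * ((1 - Real.exp (p*(T-t₀)))/(β-α-δ)))
        atTop (nhds (m * Real.exp ((α+δ)*(t₀-s)) * 0
        + δ * m * Real.exp ((α+δ)*(t₀-s)) * ((1 - 0)/(β-α-δ)))) := by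
      exact ((he.const_mul _)).add
        ((((tendsto_const_nhds.sub he).div_const _)).const_mul _)
    have hle := ge_of_tendsto hlim (eventually_atTop.2 ⟨t₀, key⟩)
    calc ‖(u t₀).2‖ ≤ m * Real.exp ((α+δ)*(t₀-s)) * 0
          + δ * m * Real.exp ((α+δ)*(t₀-s)) * ((1 - 0)/(β-α-δ)) := hle
      _ = ρ * m * Real.exp ((α+δ)*(t₀-s)) := by rw [hρdef]; field_simp; ring
  -- Step 2
  set a : ℝ := ‖(u s).1‖ with hadef
  set c : ℝ := max a (ρ * m) with hcdef
  have hac : a ≤ c := le_max_left _ _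
  have hρmc : ρ * m ≤ c := le_max_right _ _
  have hφx : ∀ ε : ℝ, 0 < ε → ∀ τ, s ≤ τ →
      ‖(u τ).1‖ ≤ (c+ε) * Real.exp ((α+δ)*(τ-s)) := by
    intro ε hε
    apply cont_ind (φ := fun τ => ‖(u τ).1‖)
      (B := fun τ => (c+ε) * Real.exp ((α+δ)*(τ-s)))
      (hucont.fst.norm) (by fun_prop)
    · simp only [sub_self, mul_zero, Real.exp_zero, mul_one]
      linarith
    · intro t₁ hst₁ hIcc
      have hvoc := hVOCx s t₁
      have hub : ∀ v ∈ Icc s t₁, ‖u v‖ ≤ (c+ε) * Real.exp ((α+δ)*(v-s)) := by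
        intro v hv
        rw [Prod.norm_def]
        apply max_le (hIcc v hv)
        calc ‖(u v).2‖ ≤ ρ * m * Real.exp ((α+δ)*(v-s)) := hyb v hv.1
          _ ≤ (c+ε) * Real.exp ((α+δ)*(v-s)) := by
              apply mul_le_mul_of_nonneg_right (by linarith) (Real.exp_pos _).le
      have hptw : ∀ v ∈ Icc s t₁, ‖NormedSpace.exp ((t₁-v) • A) (F (u v))‖ ≤
          δ * ((c+ε) * Real.exp (α*(t₁-s))) * Real.exp (δ*v + (-(δ*s))) := by
        intro v hv
        calc ‖NormedSpace.exp ((t₁-v) • A) (F (u v))‖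
            ≤ ‖NormedSpace.exp ((t₁-v) • A)‖ * ‖F (u v)‖ :=
              ContinuousLinearMap.le_opNorm _ _
          _ ≤ Real.exp (α*(t₁-v)) * (δ * ((c+ε) * Real.exp ((α+δ)*(v-s)))) := by
              apply mul_le_mul (hAnorm t₁ v hv.2)
                (le_trans (hFnorm (u v)) (mul_le_mul_of_nonneg_left (hub v hv) hδ))
                (norm_nonneg _) (Real.exp_pos _).le
          _ = δ * ((c+ε) * Real.exp (α*(t₁-s))) * Real.exp (δ*v + (-(δ*s))) := by
              have hq : Real.exp (α*(t₁-v)) * Real.exp ((α+δ)*(v-s))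
                  = Real.exp (α*(t₁-s)) * Real.exp (δ*v + (-(δ*s))) := by
                rw [← Real.exp_add, ← Real.exp_add]; ring_nf
              linear_combination δ * (c+ε) * hq
      have hInt1 : IntervalIntegrable
          (fun v => ‖NormedSpace.exp ((t₁-v) • A) (F (u v))‖) volume s t₁ := by
        apply Continuous.intervalIntegrable
        apply Continuous.norm
        exact (continuous_iff_continuousAt.2 fun v =>
          (HasDerivAt.continuousAt (by
            have h1 : HasDerivAt (fun w : ℝ => NormedSpace.exp (w • A))
                (NormedSpace.exp ((t₁-v) • A) * A) (t₁ - v) :=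
              hasDerivAt_exp_smul_const A (t₁-v)
            have h2 : HasDerivAt (fun w : ℝ => t₁ - w) (-1) v := by
              exact (hasDerivAt_id' v).const_sub t₁
            exact h1.scomp v h2))).clm_apply hFcont
      have hInt2 : IntervalIntegrable
          (fun v => δ * ((c+ε) * Real.exp (α*(t₁-s))) * Real.exp (δ*v + (-(δ*s))) : ℝ → ℝ)
          volume s t₁ := by
        apply Continuous.intervalIntegrable
        fun_prop
      have hintval : (∫ v in s..t₁, δ * ((c+ε) * Real.exp (α*(t₁-s))) * Real.exp (δ*v + (-(δ*s))))
          = (c+ε) * Real.exp (α*(t₁-s)) * (Real.exp (δ*(t₁-s)) - 1) := by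
        rcases eq_or_ne δ 0 with hδ0 | hδ0
        · simp [hδ0]
        · rw [intervalIntegral.integral_const_mul, exp_int δ (-(δ*s)) s t₁ hδ0]
          have h1 : Real.exp (δ*t₁ + (-(δ*s))) = Real.exp (δ*(t₁-s)) := by
            congr 1; ring
          have h2 : Real.exp (δ*s + (-(δ*s))) = 1 := by rw [add_neg_cancel, Real.exp_zero]
          rw [h1, h2]
          field_simp
      have hfinal : ‖(u t₁).1‖ ≤ Real.exp (α*(t₁-s)) * a
          + (c+ε) * Real.exp (α*(t₁-s)) * (Real.exp (δ*(t₁-s)) - 1) := by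
        rw [hvoc]
        refine le_trans (norm_add_le _ _) (add_le_add ?_ ?_)
        · calc ‖NormedSpace.exp ((t₁-s) • A) ((u s).1)‖
              ≤ ‖NormedSpace.exp ((t₁-s) • A)‖ * ‖(u s).1‖ :=
                ContinuousLinearMap.le_opNorm _ _
            _ ≤ Real.exp (α*(t₁-s)) * a := by
                apply mul_le_mul_of_nonneg_right (hAnorm t₁ s hst₁.le) (norm_nonneg _) |>.trans
                exact le_of_eq rfl
        · calc ‖∫ v in s..t₁, NormedSpace.exp ((t₁-v) • A) (F (u v))‖
              ≤ ∫ v in s..t₁, ‖NormedSpace.exp ((t₁-v) • A) (F (u v))‖ :=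
                norm_integral_le_integral_norm hst₁.le
            _ ≤ ∫ v in s..t₁, δ * ((c+ε) * Real.exp (α*(t₁-s))) * Real.exp (δ*v + (-(δ*s))) :=
                integral_mono_on hst₁.le hInt1 hInt2 hptw
            _ = (c+ε) * Real.exp (α*(t₁-s)) * (Real.exp (δ*(t₁-s)) - 1) := hintval
      have hexp : Real.exp ((α+δ)*(t₁-s)) = Real.exp (α*(t₁-s)) * Real.exp (δ*(t₁-s)) := by
        rw [← Real.exp_add]; congr 1; ring
      have hEpos := Real.exp_pos (α*(t₁-s))
      calc ‖(u t₁).1‖ ≤ Real.exp (α*(t₁-s)) * a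
            + (c+ε) * Real.exp (α*(t₁-s)) * (Real.exp (δ*(t₁-s)) - 1) := hfinal
        _ < (c+ε) * Real.exp ((α+δ)*(t₁-s)) := by
            rw [hexp]; nlinarith [hEpos, hac, hε]
  have hφx0 : ∀ τ, s ≤ τ → ‖(u τ).1‖ ≤ c * Real.exp ((α+δ)*(τ-s)) := by
    intro τ hτ
    have hE := Real.exp_pos ((α+δ)*(τ-s))
    refine le_of_forall_pos_le_add fun ε' hε' => ?_
    have h1 := hφx (ε'/Real.exp ((α+δ)*(τ-s))) (by positivity) τ hτ
    calc ‖(u τ).1‖ ≤ (c + ε'/Real.exp ((α+δ)*(τ-s))) * Real.exp ((α+δ)*(τ-s)) := h1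
      _ = c * Real.exp ((α+δ)*(τ-s)) + ε' := by field_simp
  have hub2 : ∀ τ, s ≤ τ → ψ τ ≤ c := by
    intro τ hτ
    have hunorm : ‖u τ‖ ≤ c * Real.exp ((α+δ)*(τ-s)) := by
      rw [Prod.norm_def]
      apply max_le (hφx0 τ hτ)
      calc ‖(u τ).2‖ ≤ ρ * m * Real.exp ((α+δ)*(τ-s)) := hyb τ hτ
        _ ≤ c * Real.exp ((α+δ)*(τ-s)) :=
            mul_le_mul_of_nonneg_right hρmc (Real.exp_pos _).le
    calc ψ τ = Real.exp (-((α+δ)*(τ-s))) * ‖u τ‖ := rfl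
      _ ≤ Real.exp (-((α+δ)*(τ-s))) * (c * Real.exp ((α+δ)*(τ-s))) :=
          mul_le_mul_of_nonneg_left hunorm (Real.exp_pos _).le
      _ = c := by
          have hq : Real.exp (-((α+δ)*(τ-s))) * Real.exp ((α+δ)*(τ-s)) = 1 := by
            rw [← Real.exp_add]; simp
          linear_combination c * hq
  have hmc : m ≤ c := csSup_le hSne (fun w hw => by
    obtain ⟨τ, hτ, rfl⟩ := hw; exact hub2 τ hτ)
  have hmus : m ≤ ‖u s‖ := by
    rcases le_or_gt m a with h | h
    · exact le_trans h (norm_fst_le _)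
    · have : m ≤ ρ * m := by
        rcases max_cases a (ρ * m) with ⟨h1, h2⟩ | ⟨h1, h2⟩
        · rw [hcdef] at hmc; rw [h1] at hmc; linarith
        · rw [hcdef] at hmc; rwa [h1] at hmc
      nlinarith [hρ1, hmnn, norm_nonneg (u s)]
  calc ‖u (t+s)‖ ≤ m * Real.exp ((α+δ)*(t+s-s)) := humle (t+s) (by linarith)
    _ = m * Real.exp ((α+δ)*t) := by
        congr 2; ring
    _ ≤ ‖u s‖ * Real.exp ((α+δ)*t) :=
        mul_le_mul_of_nonneg_right hmus (Real.exp_pos _).le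



section ZeroSol
variable {X Y : Type*} [NormedAddCommGroup X] [NormedSpace ℝ X]
    [NormedAddCommGroup Y] [NormedSpace ℝ Y]

lemma zero_sol
    (A : X →L[ℝ] X) (B : Y →L[ℝ] Y) (δ : ℝ)
    (F : X × Y → X) (G : X × Y → Y) (z : ℝ → X × Y → X × Y)
    (hδ : 0 ≤ δ)
    (hLip : ∀ w₁ w₂ : X × Y, ‖((F w₁, G w₁) : X × Y) - (F w₂, G w₂)‖ ≤ δ * ‖w₁ - w₂‖)
    (hH0 : ((F 0, G 0) : X × Y) = 0)
    (hz0 : ∀ z₀ : X × Y, z 0 z₀ = z₀)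
    (hode : ∀ (z₀ : X × Y) (t : ℝ),
      HasDerivAt (fun τ => z τ z₀)
        (((A (z t z₀).1, B (z t z₀).2) : X × Y) + (F (z t z₀), G (z t z₀))) t) :
    ∀ t : ℝ, z t ((0,0) : X × Y) = ((0,0) : X × Y) := by
  set K : ℝ := max ‖A‖ ‖B‖ + δ with hK
  have hHnorm : ∀ w : X × Y, ‖(((F w, G w)) : X × Y)‖ ≤ δ * ‖w‖ := by
    intro w
    calc ‖((F w, G w) : X × Y)‖ = ‖((F w, G w) : X × Y) - (F 0, G 0)‖ := by rw [hH0, sub_zero]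
      _ ≤ δ * ‖w - 0‖ := hLip w 0
      _ = δ * ‖w‖ := by rw [sub_zero]
  have hbound : ∀ w : X × Y, ‖((A w.1, B w.2) : X × Y) + (F w, G w)‖ ≤ K * ‖w‖ := by
    intro w
    have h1 : ‖((A w.1, B w.2) : X × Y)‖ ≤ max ‖A‖ ‖B‖ * ‖w‖ := by
      rw [Prod.norm_def]
      apply max_le
      · exact le_trans (A.le_opNorm w.1)
          (mul_le_mul (le_max_left _ _) (norm_fst_le w) (norm_nonneg _)
            (le_trans (norm_nonneg _) (le_max_left _ _)))
      · exact le_trans (B.le_opNorm w.2)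
          (mul_le_mul (le_max_right _ _) (norm_snd_le w) (norm_nonneg _)
            (le_trans (norm_nonneg _) (le_max_left _ _)))
    calc ‖((A w.1, B w.2) : X × Y) + (F w, G w)‖
        ≤ ‖((A w.1, B w.2) : X × Y)‖ + ‖((F w, G w) : X × Y)‖ := norm_add_le _ _
      _ ≤ max ‖A‖ ‖B‖ * ‖w‖ + δ * ‖w‖ := add_le_add h1 (hHnorm w)
      _ = K * ‖w‖ := by rw [hK]; ring
  have hfwd : ∀ g : ℝ → X × Y, (∀ τ, HasDerivAt g
      (((A (g τ).1, B (g τ).2) : X × Y) + (F (g τ), G (g τ))) τ) → g 0 = 0 →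
      ∀ t : ℝ, 0 ≤ t → g t = 0 := by
    intro g hg hg0 t ht
    have hcont : ContinuousOn g (Icc 0 t) :=
      (continuous_iff_continuousAt.2 fun τ => (hg τ).continuousAt).continuousOn
    have := norm_le_gronwallBound_of_norm_deriv_right_le (f := g)
      (f' := fun τ => ((A (g τ).1, B (g τ).2) : X × Y) + (F (g τ), G (g τ)))
      (δ := 0) (K := K) (ε := 0) (a := 0) (b := t) hcont
      (fun τ _ => (hg τ).hasDerivWithinAt)
      (by rw [hg0]; simp)
      (fun τ _ => by simpa using hbound (g τ))
    have h2 := this t ⟨ht, le_refl t⟩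
    rw [gronwallBound_ε0_δ0] at h2
    exact norm_le_zero_iff.1 h2
  have hforig : ∀ t : ℝ, 0 ≤ t → z t ((0,0) : X × Y) = 0 := by
    apply hfwd _ (hode ((0,0) : X × Y))
    have := hz0 ((0,0) : X × Y)
    exact this
  have hbwd : ∀ t : ℝ, 0 ≤ t → z (-t) ((0,0) : X × Y) = 0 := by
    set g : ℝ → X × Y := fun τ => z (-τ) ((0,0) : X × Y) with hg
    have hgd : ∀ τ, HasDerivAt g
        (-(((A (g τ).1, B (g τ).2) : X × Y) + (F (g τ), G (g τ)))) τ := by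
      intro τ
      have h1 := (hode ((0,0) : X × Y) (-τ)).scomp τ (hasDerivAt_neg τ)
      simpa [hg, Function.comp_def] using h1
    intro t ht
    have hcont : ContinuousOn g (Icc 0 t) :=
      (continuous_iff_continuousAt.2 fun τ => (hgd τ).continuousAt).continuousOn
    have := norm_le_gronwallBound_of_norm_deriv_right_le (f := g)
      (f' := fun τ => -(((A (g τ).1, B (g τ).2) : X × Y) + (F (g τ), G (g τ))))
      (δ := 0) (K := K) (ε := 0) (a := 0) (b := t) hcont
      (fun τ _ => (hgd τ).hasDerivWithinAt)
      (by
        have hg0 : g 0 = 0 := by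
          rw [hg]; show z (-0) ((0,0) : X × Y) = 0
          rw [neg_zero, hz0]; simp [Prod.ext_iff]
        rw [hg0]; simp)
      (fun τ _ => by rw [norm_neg]; simpa using hbound (g τ))
    have h2 := this t ⟨ht, le_refl t⟩
    rw [gronwallBound_ε0_δ0] at h2
    exact norm_le_zero_iff.1 h2
  intro t
  rcases le_total 0 t with h | h
  · exact hforig t h
  · have := hbwd (-t) (by linarith)
    rwa [neg_neg] at this

end ZeroSol


set_option maxHeartbeats 1000000 in
/-- **Invariance of the leaves through the origin.** -/
theorem invariance_of_leaves_through_origin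
    {X Y : Type*} [NormedAddCommGroup X] [NormedSpace ℝ X] [CompleteSpace X]
    [NormedAddCommGroup Y] [NormedSpace ℝ Y] [CompleteSpace Y]
    (A : X →L[ℝ] X) (B : Y →L[ℝ] Y) (α β δ : ℝ)
    (F : X × Y → X) (G : X × Y → Y)
    (z : ℝ → X × Y → X × Y)
    (hA : ∀ t : ℝ, 0 ≤ t → ‖NormedSpace.exp (t • A)‖ ≤ Real.exp (α * t))
    (hB : ∀ t : ℝ, 0 ≤ t → ‖NormedSpace.exp ((-t) • B)‖ ≤ Real.exp (-(β * t)))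
    (hδ : 0 ≤ δ)
    (hLip : ∀ w₁ w₂ : X × Y, ‖((F w₁, G w₁) : X × Y) - (F w₂, G w₂)‖ ≤ δ * ‖w₁ - w₂‖)
    (hH0 : ((F 0, G 0) : X × Y) = 0)
    (hgap : 2 * δ < β - α)
    (hz0 : ∀ z₀ : X × Y, z 0 z₀ = z₀)
    (hode : ∀ (z₀ : X × Y) (t : ℝ),
      HasDerivAt (fun τ => z τ z₀)
        (((A (z t z₀).1, B (z t z₀).2) : X × Y) + (F (z t z₀), G (z t z₀))) t)
    (hflow : ∀ (z₀ : X × Y) (s t : ℝ), z t (z s z₀) = z (t + s) z₀) :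
    (∀ z₀ : X × Y,
      (∀ t : ℝ, 0 ≤ t →
          ‖z t z₀ - z t ((0, 0) : X × Y)‖ ≤ ‖z₀ - ((0, 0) : X × Y)‖ * Real.exp ((α + δ) * t)) →
      ∀ s : ℝ, ∀ t : ℝ, 0 ≤ t →
          ‖z t (z s z₀) - z t ((0, 0) : X × Y)‖
            ≤ ‖z s z₀ - ((0, 0) : X × Y)‖ * Real.exp ((α + δ) * t)) ∧
    (∀ z₀ : X × Y,
      (∀ t : ℝ, t ≤ 0 →
          ‖z t z₀ - z t ((0, 0) : X × Y)‖ ≤ ‖z₀ - ((0, 0) : X × Y)‖ * Real.exp ((β - δ) * t)) →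
      ∀ s : ℝ, ∀ t : ℝ, t ≤ 0 →
          ‖z t (z s z₀) - z t ((0, 0) : X × Y)‖
            ≤ ‖z s z₀ - ((0, 0) : X × Y)‖ * Real.exp ((β - δ) * t)) := by
  have h0 : ∀ τ : ℝ, z τ ((0,0) : X × Y) = ((0,0) : X × Y) :=
    zero_sol A B δ F G z hδ hLip hH0 hz0 hode
  have h0' : ∀ τ : ℝ, z τ ((0,0) : X × Y) = 0 := fun τ => by rw [h0 τ]; rfl
  have hswap : ∀ v : X × Y, ‖((v.2, v.1) : Y × X)‖ = ‖v‖ := fun v => by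
    rw [Prod.norm_def, Prod.norm_def]; exact max_comm _ _
  have hzz : ((0,0) : X × Y) = 0 := rfl
  constructor
  · intro z₀ hyp s t' ht'
    rw [hflow z₀ s t', h0' t', sub_zero, hzz, sub_zero]
    have hyp' : ∀ τ : ℝ, 0 ≤ τ → ‖z τ z₀‖ ≤ ‖z₀‖ * Real.exp ((α + δ) * τ) := by
      intro τ hτ
      have := hyp τ hτ
      rwa [h0' τ, sub_zero, hzz, sub_zero] at this
    exact main_aux A B α β δ F G z hA hB hδ hLip hH0 hgap hode z₀ hyp' s t' ht'
  · intro z₀ hyp s t' ht'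
    rw [hflow z₀ s t', h0' t', sub_zero, hzz, sub_zero]
    -- reversed, swapped system
    set z' : ℝ → Y × X → Y × X :=
      fun τ w => ((z (-τ) (w.2, w.1)).2, (z (-τ) (w.2, w.1)).1) with hz'
    set F' : Y × X → Y := fun w => -G (w.2, w.1) with hF'
    set G' : Y × X → X := fun w => -F (w.2, w.1) with hG'
    have hA' : ∀ τ : ℝ, 0 ≤ τ → ‖NormedSpace.exp (τ • (-B))‖ ≤ Real.exp ((-β) * τ) := by
      intro τ hτ
      have h := hB τ hτ
      rw [neg_smul, ← smul_neg] at h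
      rwa [neg_mul]
    have hB' : ∀ τ : ℝ, 0 ≤ τ → ‖NormedSpace.exp ((-τ) • (-A))‖ ≤ Real.exp (-((-α) * τ)) := by
      intro τ hτ
      have h := hA τ hτ
      rwa [neg_smul_neg, neg_mul, neg_neg]
    have hLip' : ∀ w₁ w₂ : Y × X,
        ‖((F' w₁, G' w₁) : Y × X) - (F' w₂, G' w₂)‖ ≤ δ * ‖w₁ - w₂‖ := by
      intro w₁ w₂
      have e1 : ‖F' w₁ - F' w₂‖ = ‖G (w₁.2, w₁.1) - G (w₂.2, w₂.1)‖ := by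
        show ‖-G (w₁.2, w₁.1) - -G (w₂.2, w₂.1)‖ = _
        rw [show -G (w₁.2, w₁.1) - -G (w₂.2, w₂.1)
          = -(G (w₁.2, w₁.1) - G (w₂.2, w₂.1)) from by abel, norm_neg]
      have e2 : ‖G' w₁ - G' w₂‖ = ‖F (w₁.2, w₁.1) - F (w₂.2, w₂.1)‖ := by
        show ‖-F (w₁.2, w₁.1) - -F (w₂.2, w₂.1)‖ = _
        rw [show -F (w₁.2, w₁.1) - -F (w₂.2, w₂.1)
          = -(F (w₁.2, w₁.1) - F (w₂.2, w₂.1)) from by abel, norm_neg]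
      have h1 : ‖((F' w₁, G' w₁) : Y × X) - (F' w₂, G' w₂)‖
          = ‖((F (w₁.2, w₁.1), G (w₁.2, w₁.1)) : X × Y) - (F (w₂.2, w₂.1), G (w₂.2, w₂.1))‖ := by
        rw [Prod.norm_def, Prod.norm_def]
        simp only [Prod.fst_sub, Prod.snd_sub]
        rw [e1, e2, max_comm]
      have h2 : ‖w₁ - w₂‖ = ‖((w₁.2, w₁.1) : X × Y) - (w₂.2, w₂.1)‖ := by
        rw [Prod.norm_def, Prod.norm_def]
        simp only [Prod.fst_sub, Prod.snd_sub]
        exact max_comm _ _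
      rw [h1, h2]
      exact hLip _ _
    have hH0' : ((F' 0, G' 0) : Y × X) = 0 := by
      have hF0 : F 0 = 0 := congrArg Prod.fst hH0
      have hG0 : G 0 = 0 := congrArg Prod.snd hH0
      have e1 : F' 0 = 0 := by
        show -G ((0 : Y × X).2, (0 : Y × X).1) = 0
        rw [show (((0 : Y × X).2, (0 : Y × X).1) : X × Y) = 0 from rfl, hG0, neg_zero]
      have e2 : G' 0 = 0 := by
        show -F ((0 : Y × X).2, (0 : Y × X).1) = 0
        rw [show (((0 : Y × X).2, (0 : Y × X).1) : X × Y) = 0 from rfl, hF0, neg_zero]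
      rw [e1, e2]
      rfl
    have hgap' : 2 * δ < (-α) - (-β) := by linarith
    have hode' : ∀ (w : Y × X) (τ : ℝ),
        HasDerivAt (fun σ => z' σ w)
          ((((-B) (z' τ w).1, (-A) (z' τ w).2) : Y × X) + (F' (z' τ w), G' (z' τ w))) τ := by
      intro w τ
      have h1 : HasDerivAt (fun σ : ℝ => z (-σ) (w.2, w.1))
          (-((((A (z (-τ) (w.2, w.1)).1, B (z (-τ) (w.2, w.1)).2)) : X × Y)
            + (F (z (-τ) (w.2, w.1)), G (z (-τ) (w.2, w.1))))) τ := by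
        have h := (hode (w.2, w.1) (-τ)).scomp τ (hasDerivAt_neg τ)
        simpa [Function.comp_def] using h
      have hfst := (ContinuousLinearMap.fst ℝ X Y).hasFDerivAt.comp_hasDerivAt τ h1
      have hsnd := (ContinuousLinearMap.snd ℝ X Y).hasFDerivAt.comp_hasDerivAt τ h1
      have h2 := HasDerivAt.prodMk hsnd hfst
      set q : X × Y := z (-τ) (w.2, w.1) with hq
      have hval : ((((-B) (z' τ w).1, (-A) (z' τ w).2) : Y × X) + (F' (z' τ w), G' (z' τ w)))
          = (((ContinuousLinearMap.snd ℝ X Y)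
              (-(((A q.1, B q.2) : X × Y) + (F q, G q))),
             (ContinuousLinearMap.fst ℝ X Y)
              (-(((A q.1, B q.2) : X × Y) + (F q, G q)))) : Y × X) := by
        show ((((-B) q.2, (-A) q.1) : Y × X) + (-G (q.1, q.2), -F (q.1, q.2)))
            = (((-(((A q.1, B q.2) : X × Y) + (F q, G q))).2,
               (-(((A q.1, B q.2) : X × Y) + (F q, G q))).1) : Y × X)
        have hqe : ((q.1, q.2) : X × Y) = q := rfl
        rw [hqe]
        refine Prod.ext ?_ ?_ <;>
          simp [ContinuousLinearMap.neg_apply] <;> abel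
      rw [hval]
      exact h2
    have hyp' : ∀ τ : ℝ, 0 ≤ τ →
        ‖z' τ ((z₀.2, z₀.1) : Y × X)‖ ≤ ‖((z₀.2, z₀.1) : Y × X)‖ * Real.exp (((-β) + δ) * τ) := by
      intro τ hτ
      have hz'val : z' τ ((z₀.2, z₀.1) : Y × X) = ((z (-τ) z₀).2, (z (-τ) z₀).1) := rfl
      have h2 := hyp (-τ) (by linarith)
      rw [h0' (-τ), sub_zero, hzz, sub_zero] at h2
      rw [hz'val, hswap (z (-τ) z₀), hswap z₀]
      calc ‖z (-τ) z₀‖ ≤ ‖z₀‖ * Real.exp ((β - δ) * (-τ)) := h2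
        _ = ‖z₀‖ * Real.exp (((-β) + δ) * τ) := by ring_nf
    have hmain := main_aux (-B) (-A) (-β) (-α) δ F' G' z' hA' hB' hδ hLip' hH0' hgap'
      hode' ((z₀.2, z₀.1) : Y × X) hyp' (-s) (-t') (by linarith)
    have harg : -(-t' + -s) = t' + s := by ring
    have hz1 : z' (-t' + -s) ((z₀.2, z₀.1) : Y × X) = ((z (t'+s) z₀).2, (z (t'+s) z₀).1) := by
      rw [show z' (-t' + -s) ((z₀.2, z₀.1) : Y × X)
        = ((z (-(-t' + -s)) z₀).2, (z (-(-t' + -s)) z₀).1) from rfl, harg]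
    have hz2 : z' (-s) ((z₀.2, z₀.1) : Y × X) = ((z s z₀).2, (z s z₀).1) := by
      rw [show z' (-s) ((z₀.2, z₀.1) : Y × X)
        = ((z (-(-s)) z₀).2, (z (-(-s)) z₀).1) from rfl, neg_neg]
    rw [hz1, hz2, hswap, hswap] at hmain
    have hexp : (-β + δ) * -t' = (β - δ) * t' := by ring
    rwa [hexp] at hmain
end
end

section
/- (Bound on the fixed point of T.) If φ ∈ F_σ is a fixed point of T_{z₀}(·, x), i.e. T_{z₀}(φ, x) = φ, then ‖φ‖_σ ≤ ‖x‖ / (1 − κ). -/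
open MeasureTheory

noncomputable section

variable {X Y : Type*} [NormedAddCommGroup X] [NormedSpace ℝ X] [CompleteSpace X]
  [NormedAddCommGroup Y] [NormedSpace ℝ Y] [CompleteSpace Y]

/-- The weighted sup-norm `‖φ‖_σ = sup_{t ≥ 0} e^{-σ t} ‖φ t‖` on `[0,∞)`. -/
noncomputable def normSigmaPos {E : Type*} [NormedAddCommGroup E] (σ : ℝ) (φ : ℝ → E) : ℝ :=
  sSup {r : ℝ | ∃ t : ℝ, 0 ≤ t ∧ r = Real.exp (-(σ * t)) * ‖φ t‖}

/-- Membership in the Banach space `F_σ` of continuous functions on `[0,∞)` with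
finite weighted sup-norm. -/
def memFsigma {E : Type*} [NormedAddCommGroup E] (σ : ℝ) (φ : ℝ → E) : Prop :=
  ContinuousOn φ (Set.Ici 0) ∧
    BddAbove {r : ℝ | ∃ t : ℝ, 0 ≤ t ∧ r = Real.exp (-(σ * t)) * ‖φ t‖}

/-- The Lyapunov–Perron map `T_{z₀}(φ, x)` for the stable foliation: the `X`-component is
`e^{tA} x + ∫₀^t e^{(t−s)A} [F(φ(s)+z(s,z₀)) − F(z(s,z₀))] ds` and the `Y`-component is
`−∫_t^∞ e^{(t−s)B} [G(φ(s)+z(s,z₀)) − G(z(s,z₀))] ds`. -/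
noncomputable def Tmap (A : X →L[ℝ] X) (B : Y →L[ℝ] Y)
    (F : X × Y → X) (G : X × Y → Y) (z : ℝ → X × Y → X × Y) (z₀ : X × Y)
    (φ : ℝ → X × Y) (x : X) (t : ℝ) : X × Y :=
  (NormedSpace.exp (t • A) x +
      ∫ s in (0:ℝ)..t, NormedSpace.exp ((t - s) • A) (F (φ s + z s z₀) - F (z s z₀)),
    -∫ s in Set.Ioi t, NormedSpace.exp ((t - s) • B) (G (φ s + z s z₀) - G (z s z₀)))

/-- The iterates `φ⁰(x)(t) = (e^{αt}(x − x₀), 0)`, `φ^{j+1}(x) = T_{z₀}(φ^j(x), x)`. -/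
noncomputable def phiIter (A : X →L[ℝ] X) (B : Y →L[ℝ] Y)
    (F : X × Y → X) (G : X × Y → Y) (z : ℝ → X × Y → X × Y) (z₀ : X × Y) (α : ℝ) :
    ℕ → X → ℝ → X × Y
  | 0 => fun x t => (Real.exp (α * t) • (x - z₀.1), (0 : Y))
  | j + 1 => fun x => Tmap A B F G z z₀ (phiIter A B F G z z₀ α j x) x

lemma my_int_exp_mul (c a b : ℝ) (hc : c ≠ 0) :
    ∫ s in a..b, Real.exp (c * s) = (Real.exp (c * b) - Real.exp (c * a)) / c := by
  have hd : ∀ u : ℝ, HasDerivAt (fun u => Real.exp (c * u) / c) (Real.exp (c * u)) u := by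
    intro u
    have h1 : HasDerivAt (fun u : ℝ => c * u) c u := by
      simpa using (hasDerivAt_id u).const_mul c
    have h2 := (Real.hasDerivAt_exp (c * u)).comp u h1
    have h3 := h2.div_const c
    simpa [mul_div_assoc, mul_div_cancel_right₀, hc] using h3
  have := intervalIntegral.integral_eq_sub_of_hasDerivAt (f := fun u => Real.exp (c*u)/c)
    (fun u _ => hd u) ((Real.continuous_exp.comp (continuous_const.mul continuous_id)).intervalIntegrable a b)
  rw [this]; ring

lemma my_int_Ioi_exp (b a : ℝ) (hb : 0 < b) :
    ∫ s in Set.Ioi a, Real.exp (-(b * s)) = Real.exp (-(b * a)) / b := by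
  have hint : IntegrableOn (fun s => Real.exp (-(b * s))) (Set.Ioi a) := by
    simpa [neg_mul] using exp_neg_integrableOn_Ioi a hb
  have hd : ∀ u ∈ Set.Ici a, HasDerivAt (fun u => -(Real.exp (-(b * u)) / b)) (Real.exp (-(b * u))) u := by
    intro u _
    have h1 : HasDerivAt (fun u : ℝ => -(b * u)) (-b) u := by
      simpa using (hasDerivAt_id u).const_mul (-b)
    have h2 := ((Real.hasDerivAt_exp (-(b * u))).comp u h1).div_const b
    have h3 : HasDerivAt (fun u => -(Real.exp (-(b * u)) / b)) _ u := h2.neg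
    convert h3 using 1
    field_simp
  have htend : Filter.Tendsto (fun u => -(Real.exp (-(b * u)) / b)) Filter.atTop (nhds 0) := by
    have h1 : Filter.Tendsto (fun u : ℝ => b * u) Filter.atTop Filter.atTop :=
      Filter.Tendsto.const_mul_atTop hb Filter.tendsto_id
    have : Filter.Tendsto (fun u : ℝ => Real.exp (-(b * u))) Filter.atTop (nhds 0) :=
      Real.tendsto_exp_atBot.comp (Filter.tendsto_neg_atTop_atBot.comp h1)
    simpa using (this.div_const b).neg
  rw [MeasureTheory.integral_Ioi_of_hasDerivAt_of_tendsto' hd hint htend]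
  ring

set_option maxHeartbeats 1000000 in
/-- **Bound on the fixed point of T.** -/
theorem fixed_point_bound
    {X Y : Type*} [NormedAddCommGroup X] [NormedSpace ℝ X] [CompleteSpace X]
    [NormedAddCommGroup Y] [NormedSpace ℝ Y] [CompleteSpace Y]
(A : X →L[ℝ] X) (B : Y →L[ℝ] Y) (α β δ σ κ : ℝ)
    (F : X × Y → X) (G : X × Y → Y)
    (z : ℝ → X × Y → X × Y) (z₀ : X × Y)
    (hA : ∀ t : ℝ, 0 ≤ t → ‖NormedSpace.exp (t • A)‖ ≤ Real.exp (α * t))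
    (hB : ∀ t : ℝ, 0 ≤ t → ‖NormedSpace.exp ((-t) • B)‖ ≤ Real.exp (-(β * t)))
    (hδ : 0 ≤ δ)
    (hLip : ∀ w₁ w₂ : X × Y, ‖((F w₁, G w₁) : X × Y) - (F w₂, G w₂)‖ ≤ δ * ‖w₁ - w₂‖)
    (hH0 : ((F 0, G 0) : X × Y) = 0)
    (hgap : 2 * δ < β - α)
    (hz0 : ∀ w : X × Y, z 0 w = w)
    (hode : ∀ (w : X × Y) (t : ℝ),
      HasDerivAt (fun τ => z τ w)
        (((A (z t w).1, B (z t w).2) : X × Y) + (F (z t w), G (z t w))) t)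
    (hσ : σ ∈ Set.Ioo (α + δ) (β - δ))
    (hκ : κ = max (δ / (β - σ)) (δ / (σ - α)))
    (x : X) (φ : ℝ → X × Y)
    (hφmem : memFsigma σ φ)
    (hfix : ∀ t : ℝ, 0 ≤ t → Tmap A B F G z z₀ φ x t = φ t) :
    normSigmaPos σ φ ≤ ‖x‖ / (1 - κ) := by
  obtain ⟨hφcont, hbdd⟩ := hφmem
  obtain ⟨hσ1, hσ2⟩ := hσ
  have hσα0 : 0 < σ - α := by linarith
  have hβσ0 : 0 < β - σ := by linarith
  have hκ0 : 0 ≤ κ := by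
    rw [hκ]
    exact le_trans (div_nonneg hδ hβσ0.le) (le_max_left _ _)
  have hκ1 : κ < 1 := by
    rw [hκ]
    apply max_lt
    · rw [div_lt_one hβσ0]; linarith
    · rw [div_lt_one hσα0]; linarith
  set N := normSigmaPos σ φ with hN
  have hmemS : ∀ s : ℝ, 0 ≤ s → Real.exp (-(σ * s)) * ‖φ s‖ ≤ N :=
    fun s hs => le_csSup hbdd ⟨s, hs, rfl⟩
  have hN0 : 0 ≤ N :=
    le_trans (mul_nonneg (Real.exp_nonneg _) (norm_nonneg _)) (hmemS 0 le_rfl)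
  have hφle : ∀ s : ℝ, 0 ≤ s → ‖φ s‖ ≤ N * Real.exp (σ * s) := by
    intro s hs
    have h := hmemS s hs
    have heq : ‖φ s‖ = Real.exp (σ * s) * (Real.exp (-(σ * s)) * ‖φ s‖) := by
      rw [← mul_assoc, ← Real.exp_add]; simp
    rw [heq]
    calc Real.exp (σ * s) * (Real.exp (-(σ * s)) * ‖φ s‖)
        ≤ Real.exp (σ * s) * N :=
          mul_le_mul_of_nonneg_left h (Real.exp_nonneg _)
      _ = N * Real.exp (σ * s) := mul_comm _ _
  have hF : ∀ w₁ w₂ : X × Y, ‖F w₁ - F w₂‖ ≤ δ * ‖w₁ - w₂‖ := fun w₁ w₂ =>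
    le_trans (norm_fst_le (((F w₁, G w₁) : X × Y) - (F w₂, G w₂))) (hLip w₁ w₂)
  have hG : ∀ w₁ w₂ : X × Y, ‖G w₁ - G w₂‖ ≤ δ * ‖w₁ - w₂‖ := fun w₁ w₂ =>
    le_trans (norm_snd_le (((F w₁, G w₁) : X × Y) - (F w₂, G w₂))) (hLip w₁ w₂)
  have key : ∀ t : ℝ, 0 ≤ t → Real.exp (-(σ * t)) * ‖φ t‖ ≤ ‖x‖ + κ * N := by
    intro t ht
    -- bound for the X-component integral
    have hbound1 : ‖∫ s in (0:ℝ)..t,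
        NormedSpace.exp ((t - s) • A) (F (φ s + z s z₀) - F (z s z₀))‖
        ≤ δ * N / (σ - α) * Real.exp (σ * t) := by
      have hgle : ∀ s ∈ Set.Ioc (0:ℝ) t,
          ‖NormedSpace.exp ((t - s) • A) (F (φ s + z s z₀) - F (z s z₀))‖
            ≤ δ * N * Real.exp (α * t) * Real.exp ((σ - α) * s) := by
        intro s hs
        have hs0 : (0:ℝ) ≤ s := hs.1.le
        have hst : (0:ℝ) ≤ t - s := by linarith [hs.2]
        have h1 := (NormedSpace.exp ((t - s) • A)).le_opNorm
          (F (φ s + z s z₀) - F (z s z₀))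
        have h2 : ‖F (φ s + z s z₀) - F (z s z₀)‖ ≤ δ * ‖φ s‖ := by
          simpa [add_sub_cancel_right] using hF (φ s + z s z₀) (z s z₀)
        have h3 := hA (t - s) hst
        have hexp : Real.exp (α * (t - s)) * Real.exp (σ * s)
            = Real.exp (α * t) * Real.exp ((σ - α) * s) := by
          rw [← Real.exp_add, ← Real.exp_add]; ring_nf
        calc ‖NormedSpace.exp ((t - s) • A) (F (φ s + z s z₀) - F (z s z₀))‖
            ≤ Real.exp (α * (t - s)) * (δ * ‖φ s‖) :=
              le_trans h1 (mul_le_mul h3 h2 (norm_nonneg _) (Real.exp_nonneg _))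
          _ ≤ Real.exp (α * (t - s)) * (δ * (N * Real.exp (σ * s))) :=
              mul_le_mul_of_nonneg_left
                (mul_le_mul_of_nonneg_left (hφle s hs0) hδ) (Real.exp_nonneg _)
          _ = δ * N * (Real.exp (α * (t - s)) * Real.exp (σ * s)) := by ring
          _ = δ * N * Real.exp (α * t) * Real.exp ((σ - α) * s) := by rw [hexp]; ring
      have hgint : IntervalIntegrable
          (fun s => δ * N * Real.exp (α * t) * Real.exp ((σ - α) * s)) volume 0 t :=
        (continuous_const.mul (Real.continuous_exp.comp
          (continuous_const.mul continuous_id))).intervalIntegrable 0 t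
      have hae : ∀ᵐ s ∂(volume.restrict (Set.uIoc (0:ℝ) t)),
          ‖NormedSpace.exp ((t - s) • A) (F (φ s + z s z₀) - F (z s z₀))‖
            ≤ δ * N * Real.exp (α * t) * Real.exp ((σ - α) * s) := by
        rw [Set.uIoc_of_le ht]
        exact ae_restrict_of_forall_mem measurableSet_Ioc hgle
      have h0 := intervalIntegral.norm_integral_le_abs_of_norm_le hae hgint
      have hval : ∫ s in (0:ℝ)..t, δ * N * Real.exp (α * t) * Real.exp ((σ - α) * s)
          = δ * N * Real.exp (α * t) *
            ((Real.exp ((σ - α) * t) - Real.exp ((σ - α) * 0)) / (σ - α)) := by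
        rw [intervalIntegral.integral_const_mul, my_int_exp_mul (σ - α) 0 t hσα0.ne']
      have hexp1 : Real.exp ((σ - α) * 0) = 1 := by simp
      have hexp2 : Real.exp (α * t) * Real.exp ((σ - α) * t) = Real.exp (σ * t) := by
        rw [← Real.exp_add]; ring_nf
      have hge1 : (1:ℝ) ≤ Real.exp ((σ - α) * t) := by
        rw [show (1:ℝ) = Real.exp 0 from (Real.exp_zero).symm]
        exact Real.exp_le_exp.mpr (by nlinarith)
      have hVnonneg : 0 ≤ δ * N * Real.exp (α * t) *
          ((Real.exp ((σ - α) * t) - Real.exp ((σ - α) * 0)) / (σ - α)) := by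
        apply mul_nonneg (by positivity)
        apply div_nonneg _ hσα0.le
        rw [hexp1]; linarith
      have hVle : δ * N * Real.exp (α * t) *
          ((Real.exp ((σ - α) * t) - Real.exp ((σ - α) * 0)) / (σ - α))
          ≤ δ * N / (σ - α) * Real.exp (σ * t) := by
        rw [hexp1]
        have hkey : δ * N * Real.exp (α * t) * (Real.exp ((σ - α) * t) - 1)
            ≤ δ * N * Real.exp (σ * t) := by
          nlinarith [Real.exp_pos (α * t), mul_nonneg hδ hN0,
            mul_nonneg (mul_nonneg hδ hN0) (Real.exp_pos (α * t)).le]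
        calc δ * N * Real.exp (α * t) * ((Real.exp ((σ - α) * t) - 1) / (σ - α))
            = (δ * N * Real.exp (α * t) * (Real.exp ((σ - α) * t) - 1)) / (σ - α) := by
              ring
          _ ≤ (δ * N * Real.exp (σ * t)) / (σ - α) := by gcongr
          _ = δ * N / (σ - α) * Real.exp (σ * t) := by ring
      calc ‖∫ s in (0:ℝ)..t,
            NormedSpace.exp ((t - s) • A) (F (φ s + z s z₀) - F (z s z₀))‖
          ≤ |∫ s in (0:ℝ)..t, δ * N * Real.exp (α * t) * Real.exp ((σ - α) * s)| := h0
        _ = δ * N * Real.exp (α * t) *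
            ((Real.exp ((σ - α) * t) - Real.exp ((σ - α) * 0)) / (σ - α)) := by
            rw [hval, abs_of_nonneg hVnonneg]
        _ ≤ δ * N / (σ - α) * Real.exp (σ * t) := hVle
    -- bound for the Y-component integral
    have hbound2 : ‖∫ s in Set.Ioi t,
        NormedSpace.exp ((t - s) • B) (G (φ s + z s z₀) - G (z s z₀))‖
        ≤ δ * N / (β - σ) * Real.exp (σ * t) := by
      have hgle2 : ∀ s ∈ Set.Ioi t,
          ‖NormedSpace.exp ((t - s) • B) (G (φ s + z s z₀) - G (z s z₀))‖
            ≤ δ * N * Real.exp (β * t) * Real.exp (-((β - σ) * s)) := by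
        intro s hs
        have hst : t ≤ s := le_of_lt hs
        have hs0 : (0:ℝ) ≤ s := le_trans ht hst
        have h1 := (NormedSpace.exp ((t - s) • B)).le_opNorm
          (G (φ s + z s z₀) - G (z s z₀))
        have h2 : ‖G (φ s + z s z₀) - G (z s z₀)‖ ≤ δ * ‖φ s‖ := by
          simpa [add_sub_cancel_right] using hG (φ s + z s z₀) (z s z₀)
        have h3 : ‖NormedSpace.exp ((t - s) • B)‖ ≤ Real.exp (-(β * (s - t))) := by
          simpa [neg_sub] using hB (s - t) (by linarith)
        have hexp : Real.exp (-(β * (s - t))) * Real.exp (σ * s)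
            = Real.exp (β * t) * Real.exp (-((β - σ) * s)) := by
          rw [← Real.exp_add, ← Real.exp_add]; ring_nf
        calc ‖NormedSpace.exp ((t - s) • B) (G (φ s + z s z₀) - G (z s z₀))‖
            ≤ Real.exp (-(β * (s - t))) * (δ * ‖φ s‖) :=
              le_trans h1 (mul_le_mul h3 h2 (norm_nonneg _) (Real.exp_nonneg _))
          _ ≤ Real.exp (-(β * (s - t))) * (δ * (N * Real.exp (σ * s))) :=
              mul_le_mul_of_nonneg_left
                (mul_le_mul_of_nonneg_left (hφle s hs0) hδ) (Real.exp_nonneg _)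
          _ = δ * N * (Real.exp (-(β * (s - t))) * Real.exp (σ * s)) := by ring
          _ = δ * N * Real.exp (β * t) * Real.exp (-((β - σ) * s)) := by rw [hexp]; ring
      have hgint2 : IntegrableOn
          (fun s => δ * N * Real.exp (β * t) * Real.exp (-((β - σ) * s))) (Set.Ioi t) := by
        have h1 : IntegrableOn (fun s => Real.exp (-((β - σ) * s))) (Set.Ioi t) := by
          have h2 := exp_neg_integrableOn_Ioi t hβσ0
          have h3 : (fun s : ℝ => Real.exp (-((β - σ) * s)))
              = fun s : ℝ => Real.exp (-(β - σ) * s) := by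
            funext s; rw [neg_mul]
          rw [h3]; exact h2
        exact h1.const_mul _
      have hae2 : ∀ᵐ s ∂(volume.restrict (Set.Ioi t)),
          ‖NormedSpace.exp ((t - s) • B) (G (φ s + z s z₀) - G (z s z₀))‖
            ≤ δ * N * Real.exp (β * t) * Real.exp (-((β - σ) * s)) :=
        ae_restrict_of_forall_mem measurableSet_Ioi hgle2
      have h0 := MeasureTheory.norm_integral_le_of_norm_le hgint2 hae2
      have hval2 : ∫ s in Set.Ioi t, δ * N * Real.exp (β * t) * Real.exp (-((β - σ) * s))
          = δ * N * Real.exp (β * t) * (Real.exp (-((β - σ) * t)) / (β - σ)) := by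
        rw [MeasureTheory.integral_const_mul, my_int_Ioi_exp (β - σ) t hβσ0]
      have hexp3 : Real.exp (β * t) * Real.exp (-((β - σ) * t)) = Real.exp (σ * t) := by
        rw [← Real.exp_add]; ring_nf
      calc ‖∫ s in Set.Ioi t,
            NormedSpace.exp ((t - s) • B) (G (φ s + z s z₀) - G (z s z₀))‖
          ≤ ∫ s in Set.Ioi t, δ * N * Real.exp (β * t) * Real.exp (-((β - σ) * s)) := h0
        _ = δ * N * Real.exp (β * t) * (Real.exp (-((β - σ) * t)) / (β - σ)) := hval2
        _ = δ * N / (β - σ) * (Real.exp (β * t) * Real.exp (-((β - σ) * t))) := by ring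
        _ = δ * N / (β - σ) * Real.exp (σ * t) := by rw [hexp3]
    -- combine
    have hδκ1 : δ * N / (σ - α) ≤ κ * N := by
      have h1 : δ / (σ - α) ≤ κ := hκ ▸ le_max_right _ _
      calc δ * N / (σ - α) = (δ / (σ - α)) * N := by ring
        _ ≤ κ * N := mul_le_mul_of_nonneg_right h1 hN0
    have hδκ2 : δ * N / (β - σ) ≤ κ * N := by
      have h1 : δ / (β - σ) ≤ κ := hκ ▸ le_max_left _ _
      calc δ * N / (β - σ) = (δ / (β - σ)) * N := by ring
        _ ≤ κ * N := mul_le_mul_of_nonneg_right h1 hN0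
    have hP : ‖NormedSpace.exp (t • A) x +
        ∫ s in (0:ℝ)..t, NormedSpace.exp ((t - s) • A) (F (φ s + z s z₀) - F (z s z₀))‖
        ≤ (‖x‖ + κ * N) * Real.exp (σ * t) := by
      have h1 : ‖NormedSpace.exp (t • A) x‖ ≤ Real.exp (σ * t) * ‖x‖ := by
        calc ‖NormedSpace.exp (t • A) x‖
            ≤ ‖NormedSpace.exp (t • A)‖ * ‖x‖ := (NormedSpace.exp (t • A)).le_opNorm x
          _ ≤ Real.exp (α * t) * ‖x‖ :=
              mul_le_mul_of_nonneg_right (hA t ht) (norm_nonneg _)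
          _ ≤ Real.exp (σ * t) * ‖x‖ :=
              mul_le_mul_of_nonneg_right
                (Real.exp_le_exp.mpr (by nlinarith)) (norm_nonneg _)
      calc ‖NormedSpace.exp (t • A) x +
          ∫ s in (0:ℝ)..t, NormedSpace.exp ((t - s) • A) (F (φ s + z s z₀) - F (z s z₀))‖
          ≤ ‖NormedSpace.exp (t • A) x‖ +
            ‖∫ s in (0:ℝ)..t, NormedSpace.exp ((t - s) • A) (F (φ s + z s z₀) - F (z s z₀))‖ :=
            norm_add_le _ _
        _ ≤ Real.exp (σ * t) * ‖x‖ + δ * N / (σ - α) * Real.exp (σ * t) :=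
            add_le_add h1 hbound1
        _ ≤ Real.exp (σ * t) * ‖x‖ + κ * N * Real.exp (σ * t) :=
            add_le_add le_rfl
              (mul_le_mul_of_nonneg_right hδκ1 (Real.exp_nonneg _))
        _ = (‖x‖ + κ * N) * Real.exp (σ * t) := by ring
    have hQ : ‖-∫ s in Set.Ioi t,
        NormedSpace.exp ((t - s) • B) (G (φ s + z s z₀) - G (z s z₀))‖
        ≤ (‖x‖ + κ * N) * Real.exp (σ * t) := by
      rw [norm_neg]
      calc ‖∫ s in Set.Ioi t,
          NormedSpace.exp ((t - s) • B) (G (φ s + z s z₀) - G (z s z₀))‖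
          ≤ δ * N / (β - σ) * Real.exp (σ * t) := hbound2
        _ ≤ κ * N * Real.exp (σ * t) :=
            mul_le_mul_of_nonneg_right hδκ2 (Real.exp_nonneg _)
        _ ≤ (‖x‖ + κ * N) * Real.exp (σ * t) := by
            apply mul_le_mul_of_nonneg_right _ (Real.exp_nonneg _)
            linarith [norm_nonneg x]
    have hmax : ‖Tmap A B F G z z₀ φ x t‖ ≤ (‖x‖ + κ * N) * Real.exp (σ * t) := by
      rw [Prod.norm_def]
      exact max_le hP hQ
    rw [← hfix t ht]
    calc Real.exp (-(σ * t)) * ‖Tmap A B F G z z₀ φ x t‖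
        ≤ Real.exp (-(σ * t)) * ((‖x‖ + κ * N) * Real.exp (σ * t)) :=
          mul_le_mul_of_nonneg_left hmax (Real.exp_nonneg _)
      _ = (‖x‖ + κ * N) * (Real.exp (-(σ * t)) * Real.exp (σ * t)) := by ring
      _ = ‖x‖ + κ * N := by rw [← Real.exp_add]; simp
  have hNle : N ≤ ‖x‖ + κ * N := by
    rw [hN, normSigmaPos]
    apply Real.sSup_le
    · rintro r ⟨s, hs, rfl⟩
      exact key s hs
    · exact add_nonneg (norm_nonneg x) (mul_nonneg hκ0 hN0)
  rw [le_div_iff₀ (by linarith : (0:ℝ) < 1 - κ)]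
  nlinarith
end
end

section
/- (Lipschitz dependence of the iterates on x.) Each iterate φ^j(x) belongs to F_σ, and for every j ≥ 0 and all x₁, x₂ ∈ X one has ‖φ^j(x₁) − φ^j(x₂)‖_σ ≤ (1/(1−κ)) ‖x₁ − x₂‖. -/
open MeasureTheory

noncomputable section

variable {X Y : Type*} [NormedAddCommGroup X] [NormedSpace ℝ X] [CompleteSpace X]
  [NormedAddCommGroup Y] [NormedSpace ℝ Y] [CompleteSpace Y]

open Set

set_option synthInstance.maxHeartbeats 400000
set_option maxHeartbeats 1000000
set_option linter.unusedSectionVars false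
set_option linter.unusedVariables false

section AuxSingle
variable {X' : Type*} [NormedAddCommGroup X'] [NormedSpace ℝ X'] [CompleteSpace X']



lemma exp_split (A : X' →L[ℝ] X') (t s : ℝ) (v : X') :
    NormedSpace.exp ((t - s) • A) v = NormedSpace.exp (t • A) (NormedSpace.exp ((-s) • A) v) := by
  have hc : Commute (t • A) ((-s) • A) := by
    rw [Commute, SemiconjBy, smul_mul_smul_comm, smul_mul_smul_comm, mul_comm]
  have h2 : (t - s) • A = t • A + (-s) • A := by rw [← add_smul]; ring_nf
  letI : NormedAlgebra ℚ (X' →L[ℝ] X') := .restrictScalars ℚ ℝ _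
  rw [h2, NormedSpace.exp_add_of_commute hc]
  rfl

lemma exp_cont (A : X' →L[ℝ] X') : Continuous fun t : ℝ => NormedSpace.exp (t • A) :=
  by
  letI : NormedAlgebra ℚ (X' →L[ℝ] X') := .restrictScalars ℚ ℝ _
  exact NormedSpace.exp_continuous.comp (continuous_id.smul continuous_const)

lemma contPrimitive {E : Type*} [NormedAddCommGroup E] [NormedSpace ℝ E] (h : ℝ → E)
    (hc : ContinuousOn h (Set.Ici 0)) :
    ContinuousOn (fun t => ∫ s in (0:ℝ)..t, h s) (Set.Ici 0) := by
  intro t₀ ht₀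
  have hint : IntegrableOn h (Set.Icc 0 (t₀ + 1)) :=
    (hc.mono Set.Icc_subset_Ici_self).integrableOn_Icc
  have hcont := intervalIntegral.continuousOn_primitive (f := h) (a := 0) (b := t₀+1)
    (μ := volume) hint
  have heq : Set.EqOn (fun t => ∫ s in (0:ℝ)..t, h s) (fun x => ∫ t in Set.Ioc 0 x, h t)
      (Set.Icc 0 (t₀+1)) := fun x hx => intervalIntegral.integral_of_le hx.1
  have h2 : ContinuousWithinAt (fun t => ∫ s in (0:ℝ)..t, h s) (Set.Icc 0 (t₀+1)) t₀ :=
    (hcont.congr heq) t₀ ⟨ht₀, by linarith [ht₀.out]⟩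
  refine h2.mono_of_mem_nhdsWithin ?_
  rw [← Set.Ici_inter_Iic]
  exact Filter.inter_mem self_mem_nhdsWithin
    (mem_nhdsWithin_of_mem_nhds (Iic_mem_nhds (lt_add_one t₀)))

lemma int_exp_Ioi (b t : ℝ) (hb : 0 < b) :
    ∫ s in Set.Ioi t, Real.exp (-b * s) = Real.exp (-b * t) / b := by
  have h := integral_Ioi_of_hasDerivAt_of_tendsto' (a := t) (m := (0:ℝ))
    (f := fun x => -Real.exp (-b * x) / b) (f' := fun x => Real.exp (-b * x))
    (fun x _ => by simpa [hb.ne'] using ((hasDerivAt_id x).const_mul b).neg.exp.neg.div_const b)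
    (exp_neg_integrableOn_Ioi t hb)
    (by
      have : Filter.Tendsto (fun x => -Real.exp (-b * x) / b) Filter.atTop (nhds (-0 / b)) := by
        refine Filter.Tendsto.div_const (Filter.Tendsto.neg ?_) _
        exact Real.tendsto_exp_atBot.comp (Filter.tendsto_id.const_mul_atTop_of_neg (by linarith))
      simpa using this)
  rw [h]; ring

lemma int_exp_interval (k t : ℝ) (hk : k ≠ 0) :
    ∫ s in (0:ℝ)..t, Real.exp (k * s) = (Real.exp (k * t) - 1) / k := by
  have h := intervalIntegral.integral_eq_sub_of_hasDerivAt (a := (0:ℝ)) (b := t)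
    (f := fun x => Real.exp (k * x) / k) (f' := fun x => Real.exp (k * x))
    (fun x _ => by simpa [hk] using ((hasDerivAt_id x).const_mul k).exp.div_const k)
    ((Real.continuous_exp.comp (continuous_const.mul continuous_id)).intervalIntegrable 0 t)
  rw [h]; simp [sub_div]





lemma normB_pt (B : X' →L[ℝ] X') {β σ c : ℝ}
    (hB : ∀ t : ℝ, 0 ≤ t → ‖NormedSpace.exp ((-t) • B)‖ ≤ Real.exp (-(β * t)))
    {g : ℝ → X'} (hg : ∀ s, 0 ≤ s → ‖g s‖ ≤ c * Real.exp (σ * s))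
    {t s : ℝ} (ht : 0 ≤ t) (hs : t ≤ s) :
    ‖NormedSpace.exp ((t - s) • B) (g s)‖ ≤ c * Real.exp (β * t) * Real.exp (-(β - σ) * s) := by
  have h2 : ‖NormedSpace.exp ((t - s) • B)‖ ≤ Real.exp (-(β * (s - t))) := by
    have := hB (s - t) (by linarith)
    rwa [show (-(s - t)) • B = (t - s) • B by ring_nf] at this
  have h3 : ‖g s‖ ≤ c * Real.exp (σ * s) := hg s (by linarith)
  calc ‖NormedSpace.exp ((t - s) • B) (g s)‖
      ≤ ‖NormedSpace.exp ((t - s) • B)‖ * ‖g s‖ := ContinuousLinearMap.le_opNorm _ _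
    _ ≤ Real.exp (-(β * (s - t))) * (c * Real.exp (σ * s)) :=
        mul_le_mul h2 h3 (norm_nonneg _) (Real.exp_pos _).le
    _ = c * (Real.exp (-(β * (s - t))) * Real.exp (σ * s)) := by ring
    _ = c * Real.exp (-(β * (s - t)) + σ * s) := by rw [← Real.exp_add]
    _ = c * (Real.exp (β * t) * Real.exp (-(β - σ) * s)) := by rw [← Real.exp_add]; congr 1; ring
    _ = c * Real.exp (β * t) * Real.exp (-(β - σ) * s) := by ring

lemma integrableB (B : X' →L[ℝ] X') {β σ c : ℝ}
    (hB : ∀ t : ℝ, 0 ≤ t → ‖NormedSpace.exp ((-t) • B)‖ ≤ Real.exp (-(β * t)))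
    (hσβ : σ < β)
    {g : ℝ → X'} (hgc : ContinuousOn g (Set.Ici 0))
    (hg : ∀ s, 0 ≤ s → ‖g s‖ ≤ c * Real.exp (σ * s))
    {t : ℝ} (ht : 0 ≤ t) :
    IntegrableOn (fun s => NormedSpace.exp ((t - s) • B) (g s)) (Set.Ioi t) := by
  have hb : (0:ℝ) < β - σ := by linarith
  refine Integrable.mono' (g := fun s => c * Real.exp (β * t) * Real.exp (-(β - σ) * s))
    (((exp_neg_integrableOn_Ioi t hb).const_mul _)) ?_ ?_
  · refine ContinuousOn.aestronglyMeasurable ?_ measurableSet_Ioi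
    exact (((exp_cont B).comp (continuous_const.sub continuous_id)).continuousOn).clm_apply
      (hgc.mono (fun s hs => le_trans ht (le_of_lt hs)))
  · filter_upwards [ae_restrict_mem measurableSet_Ioi] with s hs
    exact normB_pt B hB hg ht (le_of_lt hs)

lemma normB_int (B : X' →L[ℝ] X') {β σ c : ℝ}
    (hB : ∀ t : ℝ, 0 ≤ t → ‖NormedSpace.exp ((-t) • B)‖ ≤ Real.exp (-(β * t)))
    (hσβ : σ < β)
    {g : ℝ → X'} (hgc : ContinuousOn g (Set.Ici 0))
    (hg : ∀ s, 0 ≤ s → ‖g s‖ ≤ c * Real.exp (σ * s))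
    {t : ℝ} (ht : 0 ≤ t) :
    ‖∫ s in Set.Ioi t, NormedSpace.exp ((t - s) • B) (g s)‖
      ≤ c / (β - σ) * Real.exp (σ * t) := by
  have hb : (0:ℝ) < β - σ := by linarith
  have hInt := integrableB B hB hσβ hgc hg ht
  have hexp : Real.exp (β * t) * Real.exp (-(β - σ) * t) = Real.exp (σ * t) := by
    rw [← Real.exp_add]; congr 1; ring
  calc ‖∫ s in Set.Ioi t, NormedSpace.exp ((t - s) • B) (g s)‖
      ≤ ∫ s in Set.Ioi t, ‖NormedSpace.exp ((t - s) • B) (g s)‖ :=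
        norm_integral_le_integral_norm _
    _ ≤ ∫ s in Set.Ioi t, c * Real.exp (β * t) * Real.exp (-(β - σ) * s) := by
        refine setIntegral_mono_on hInt.norm ((exp_neg_integrableOn_Ioi t hb).const_mul _)
          measurableSet_Ioi (fun s hs => normB_pt B hB hg ht (le_of_lt hs))
    _ = c * Real.exp (β * t) * ∫ s in Set.Ioi t, Real.exp (-(β - σ) * s) := by
        rw [integral_const_mul]
    _ = c * Real.exp (β * t) * (Real.exp (-(β - σ) * t) / (β - σ)) := by
        rw [int_exp_Ioi _ _ hb]
    _ = c / (β - σ) * (Real.exp (β * t) * Real.exp (-(β - σ) * t)) := by ring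
    _ = c / (β - σ) * Real.exp (σ * t) := by rw [hexp]

lemma normA_int (A : X' →L[ℝ] X') {α σ c : ℝ}
    (hA : ∀ t : ℝ, 0 ≤ t → ‖NormedSpace.exp (t • A)‖ ≤ Real.exp (α * t))
    (hασ : α < σ) (hc : 0 ≤ c)
    {g : ℝ → X'} (hgc : ContinuousOn g (Set.Ici 0))
    (hg : ∀ s, 0 ≤ s → ‖g s‖ ≤ c * Real.exp (σ * s))
    {t : ℝ} (ht : 0 ≤ t) :
    ‖∫ s in (0:ℝ)..t, NormedSpace.exp ((t - s) • A) (g s)‖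
      ≤ c / (σ - α) * Real.exp (σ * t) := by
  have hk : (0:ℝ) < σ - α := by linarith
  have hptw : ∀ s ∈ Set.Icc 0 t, ‖NormedSpace.exp ((t - s) • A) (g s)‖
      ≤ c * Real.exp (α * t) * Real.exp ((σ - α) * s) := by
    intro s hs
    have h2 : ‖NormedSpace.exp ((t - s) • A)‖ ≤ Real.exp (α * (t - s)) :=
      hA (t - s) (by linarith [hs.2])
    have h3 : ‖g s‖ ≤ c * Real.exp (σ * s) := hg s hs.1
    calc ‖NormedSpace.exp ((t - s) • A) (g s)‖
        ≤ ‖NormedSpace.exp ((t - s) • A)‖ * ‖g s‖ := ContinuousLinearMap.le_opNorm _ _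
      _ ≤ Real.exp (α * (t - s)) * (c * Real.exp (σ * s)) :=
          mul_le_mul h2 h3 (norm_nonneg _) (Real.exp_pos _).le
      _ = c * Real.exp (α * (t - s) + σ * s) := by rw [Real.exp_add]; ring
      _ = c * (Real.exp (α * t) * Real.exp ((σ - α) * s)) := by
          rw [← Real.exp_add]; congr 1; ring
      _ = c * Real.exp (α * t) * Real.exp ((σ - α) * s) := by ring
  have hcontI : ContinuousOn (fun s => NormedSpace.exp ((t - s) • A) (g s)) (Set.Icc 0 t) :=
    (((exp_cont A).comp (continuous_const.sub continuous_id)).continuousOn).clm_apply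
      (hgc.mono (fun s hs => hs.1))
  have hIi : IntervalIntegrable (fun s => ‖NormedSpace.exp ((t - s) • A) (g s)‖) volume 0 t := by
    apply ContinuousOn.intervalIntegrable
    rw [Set.uIcc_of_le ht]
    exact hcontI.norm
  have hIg : IntervalIntegrable (fun s => c * Real.exp (α * t) * Real.exp ((σ - α) * s))
      volume 0 t :=
    (continuous_const.mul
      (Real.continuous_exp.comp (continuous_const.mul continuous_id))).intervalIntegrable 0 t
  calc ‖∫ s in (0:ℝ)..t, NormedSpace.exp ((t - s) • A) (g s)‖
      ≤ ∫ s in (0:ℝ)..t, ‖NormedSpace.exp ((t - s) • A) (g s)‖ :=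
        intervalIntegral.norm_integral_le_integral_norm ht
    _ ≤ ∫ s in (0:ℝ)..t, c * Real.exp (α * t) * Real.exp ((σ - α) * s) :=
        intervalIntegral.integral_mono_on ht hIi hIg hptw
    _ = c * Real.exp (α * t) * ∫ s in (0:ℝ)..t, Real.exp ((σ - α) * s) := by
        rw [intervalIntegral.integral_const_mul]
    _ = c * Real.exp (α * t) * ((Real.exp ((σ - α) * t) - 1) / (σ - α)) := by
        rw [int_exp_interval _ _ hk.ne']
    _ ≤ c * Real.exp (α * t) * (Real.exp ((σ - α) * t) / (σ - α)) := by
        gcongr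
        linarith [Real.exp_pos ((σ - α) * t)]
    _ = c / (σ - α) * (Real.exp (α * t) * Real.exp ((σ - α) * t)) := by ring
    _ = c / (σ - α) * Real.exp (σ * t) := by rw [← Real.exp_add]; congr 1; ring

end AuxSingle

section DDD
variable {X Y : Type*} [NormedAddCommGroup X] [NormedSpace ℝ X] [CompleteSpace X]
  [NormedAddCommGroup Y] [NormedSpace ℝ Y] [CompleteSpace Y]

lemma core (A : X →L[ℝ] X) (B : Y →L[ℝ] Y) {α β σ c : ℝ}
    (hA : ∀ t : ℝ, 0 ≤ t → ‖NormedSpace.exp (t • A)‖ ≤ Real.exp (α * t))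
    (hB : ∀ t : ℝ, 0 ≤ t → ‖NormedSpace.exp ((-t) • B)‖ ≤ Real.exp (-(β * t)))
    (hασ : α < σ) (hσβ : σ < β) (hc : 0 ≤ c)
    {g₁ : ℝ → X} {g₂ : ℝ → Y}
    (hg₁c : ContinuousOn g₁ (Set.Ici 0)) (hg₂c : ContinuousOn g₂ (Set.Ici 0))
    (hg₁ : ∀ s, 0 ≤ s → ‖g₁ s‖ ≤ c * Real.exp (σ * s))
    (hg₂ : ∀ s, 0 ≤ s → ‖g₂ s‖ ≤ c * Real.exp (σ * s))
    (x : X) :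
    ContinuousOn (fun t => ((NormedSpace.exp (t • A) x +
        ∫ s in (0:ℝ)..t, NormedSpace.exp ((t - s) • A) (g₁ s),
      -∫ s in Set.Ioi t, NormedSpace.exp ((t - s) • B) (g₂ s)) : X × Y)) (Set.Ici 0) ∧
    ∀ t, 0 ≤ t → ‖((NormedSpace.exp (t • A) x +
        ∫ s in (0:ℝ)..t, NormedSpace.exp ((t - s) • A) (g₁ s),
      -∫ s in Set.Ioi t, NormedSpace.exp ((t - s) • B) (g₂ s)) : X × Y)‖
      ≤ (‖x‖ + c * max (1 / (σ - α)) (1 / (β - σ))) * Real.exp (σ * t) := by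
  have hk : (0:ℝ) < σ - α := by linarith
  have hb : (0:ℝ) < β - σ := by linarith
  set m := max (1 / (σ - α)) (1 / (β - σ)) with hm
  -- continuity
  have h₁c : ContinuousOn (fun s => NormedSpace.exp ((-s) • A) (g₁ s)) (Set.Ici 0) :=
    (((exp_cont A).comp continuous_neg).continuousOn).clm_apply hg₁c
  have h₂c : ContinuousOn (fun s => NormedSpace.exp ((-s) • B) (g₂ s)) (Set.Ici 0) :=
    (((exp_cont B).comp continuous_neg).continuousOn).clm_apply hg₂c
  have h₂int : ∀ t : ℝ, 0 ≤ t →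
      IntegrableOn (fun s => NormedSpace.exp ((-s) • B) (g₂ s)) (Set.Ioi t) := by
    intro t ht
    have := integrableB B hB hσβ hg₂c hg₂ (t := 0) le_rfl
    simp only [zero_sub] at this
    exact this.mono_set (Set.Ioi_subset_Ioi ht)
  have hP : ContinuousOn (fun t => NormedSpace.exp (t • A) x +
      ∫ s in (0:ℝ)..t, NormedSpace.exp ((t - s) • A) (g₁ s)) (Set.Ici 0) := by
    refine ContinuousOn.congr (f := fun t => NormedSpace.exp (t • A)
      (x + ∫ s in (0:ℝ)..t, NormedSpace.exp ((-s) • A) (g₁ s))) ?_ ?_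
    · exact ((exp_cont A).continuousOn).clm_apply
        (continuousOn_const.add (contPrimitive _ h₁c))
    · intro t ht
      have hii : IntervalIntegrable (fun s => NormedSpace.exp ((-s) • A) (g₁ s))
          volume 0 t := by
        apply ContinuousOn.intervalIntegrable
        rw [Set.uIcc_of_le ht]
        exact h₁c.mono Set.Icc_subset_Ici_self
      have e1 : ∫ s in (0:ℝ)..t, NormedSpace.exp ((t - s) • A) (g₁ s)
          = NormedSpace.exp (t • A) (∫ s in (0:ℝ)..t, NormedSpace.exp ((-s) • A) (g₁ s)) := by
        rw [← (NormedSpace.exp (t • A)).intervalIntegral_comp_comm hii]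
        exact intervalIntegral.integral_congr (fun s _ => exp_split A t s (g₁ s))
      simp only [e1, map_add]
  have hQ : ContinuousOn (fun t => -∫ s in Set.Ioi t,
      NormedSpace.exp ((t - s) • B) (g₂ s)) (Set.Ici 0) := by
    set K := ∫ s in Set.Ioi (0:ℝ), NormedSpace.exp ((-s) • B) (g₂ s) with hK
    refine ContinuousOn.congr (f := fun t => -(NormedSpace.exp (t • B)
      (K - ∫ s in (0:ℝ)..t, NormedSpace.exp ((-s) • B) (g₂ s)))) ?_ ?_
    · exact (((exp_cont B).continuousOn).clm_apply
        (continuousOn_const.sub (contPrimitive _ h₂c))).neg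
    · intro t ht
      have e0 : (fun s => NormedSpace.exp ((t - s) • B) (g₂ s))
          = fun s => NormedSpace.exp (t • B) (NormedSpace.exp ((-s) • B) (g₂ s)) :=
        funext fun s => exp_split B t s (g₂ s)
      have e2 : ∫ s in Set.Ioi t, NormedSpace.exp ((-s) • B) (g₂ s)
          = K - ∫ s in (0:ℝ)..t, NormedSpace.exp ((-s) • B) (g₂ s) := by
        have hsplit : K = (∫ s in Set.Ioc (0:ℝ) t, NormedSpace.exp ((-s) • B) (g₂ s))
            + ∫ s in Set.Ioi t, NormedSpace.exp ((-s) • B) (g₂ s) := by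
          rw [hK, ← setIntegral_union (Set.Ioc_disjoint_Ioi le_rfl) measurableSet_Ioi
            ((h₂int 0 le_rfl).mono_set Set.Ioc_subset_Ioi_self) (h₂int t ht),
            Set.Ioc_union_Ioi_eq_Ioi ht]
        rw [intervalIntegral.integral_of_le ht]
        rw [hsplit]; abel
      have e3 : ∫ s in Set.Ioi t, NormedSpace.exp ((t - s) • B) (g₂ s)
          = NormedSpace.exp (t • B) (∫ s in Set.Ioi t, NormedSpace.exp ((-s) • B) (g₂ s)) := by
        rw [e0]
        exact ContinuousLinearMap.integral_comp_comm _ (h₂int t ht)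
      simp only [e3, e2]
  refine ⟨hP.prodMk hQ, ?_⟩
  intro t ht
  have hPb : ‖NormedSpace.exp (t • A) x +
      ∫ s in (0:ℝ)..t, NormedSpace.exp ((t - s) • A) (g₁ s)‖
      ≤ (‖x‖ + c * m) * Real.exp (σ * t) := by
    have h1 : ‖NormedSpace.exp (t • A) x‖ ≤ Real.exp (σ * t) * ‖x‖ := by
      calc ‖NormedSpace.exp (t • A) x‖ ≤ ‖NormedSpace.exp (t • A)‖ * ‖x‖ :=
            ContinuousLinearMap.le_opNorm _ _
        _ ≤ Real.exp (α * t) * ‖x‖ := mul_le_mul_of_nonneg_right (hA t ht) (norm_nonneg _)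
        _ ≤ Real.exp (σ * t) * ‖x‖ := mul_le_mul_of_nonneg_right
            (Real.exp_le_exp.2 (mul_le_mul_of_nonneg_right hασ.le ht)) (norm_nonneg _)
    have h2 := normA_int A hA hασ hc hg₁c hg₁ ht
    have h3 : c / (σ - α) ≤ c * m := by
      rw [div_eq_mul_one_div]
      exact mul_le_mul_of_nonneg_left (le_max_left _ _) hc
    calc ‖NormedSpace.exp (t • A) x +
        ∫ s in (0:ℝ)..t, NormedSpace.exp ((t - s) • A) (g₁ s)‖
        ≤ ‖NormedSpace.exp (t • A) x‖ +
          ‖∫ s in (0:ℝ)..t, NormedSpace.exp ((t - s) • A) (g₁ s)‖ := norm_add_le _ _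
      _ ≤ Real.exp (σ * t) * ‖x‖ + c / (σ - α) * Real.exp (σ * t) := add_le_add h1 h2
      _ ≤ Real.exp (σ * t) * ‖x‖ + c * m * Real.exp (σ * t) :=
          add_le_add_right (mul_le_mul_of_nonneg_right h3 (Real.exp_pos _).le) _
      _ = (‖x‖ + c * m) * Real.exp (σ * t) := by ring
  have hQb : ‖-∫ s in Set.Ioi t, NormedSpace.exp ((t - s) • B) (g₂ s)‖
      ≤ (‖x‖ + c * m) * Real.exp (σ * t) := by
    rw [norm_neg]
    have h2 := normB_int B hB hσβ hg₂c hg₂ ht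
    have h3 : c / (β - σ) ≤ c * m := by
      rw [div_eq_mul_one_div]
      exact mul_le_mul_of_nonneg_left (le_max_right _ _) hc
    calc ‖∫ s in Set.Ioi t, NormedSpace.exp ((t - s) • B) (g₂ s)‖
        ≤ c / (β - σ) * Real.exp (σ * t) := h2
      _ ≤ c * m * Real.exp (σ * t) := mul_le_mul_of_nonneg_right h3 (Real.exp_pos _).le
      _ ≤ (‖x‖ + c * m) * Real.exp (σ * t) := by
          apply mul_le_mul_of_nonneg_right _ (Real.exp_pos _).le
          linarith [norm_nonneg x]
  calc ‖((NormedSpace.exp (t • A) x +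
        ∫ s in (0:ℝ)..t, NormedSpace.exp ((t - s) • A) (g₁ s),
      -∫ s in Set.Ioi t, NormedSpace.exp ((t - s) • B) (g₂ s)) : X × Y)‖
      = max ‖NormedSpace.exp (t • A) x +
        ∫ s in (0:ℝ)..t, NormedSpace.exp ((t - s) • A) (g₁ s)‖
        ‖-∫ s in Set.Ioi t, NormedSpace.exp ((t - s) • B) (g₂ s)‖ := rfl
    _ ≤ (‖x‖ + c * m) * Real.exp (σ * t) := max_le hPb hQb
end DDD

section Helpers
variable {E : Type*} [NormedAddCommGroup E]

lemma mem_bound {σ K : ℝ} {φ : ℝ → E}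
    (h : ∀ t, 0 ≤ t → ‖φ t‖ ≤ K * Real.exp (σ * t)) :
    ∀ r ∈ {r : ℝ | ∃ t : ℝ, 0 ≤ t ∧ r = Real.exp (-(σ * t)) * ‖φ t‖}, r ≤ K := by
  rintro r ⟨t, ht, rfl⟩
  calc Real.exp (-(σ * t)) * ‖φ t‖
      ≤ Real.exp (-(σ * t)) * (K * Real.exp (σ * t)) :=
        mul_le_mul_of_nonneg_left (h t ht) (Real.exp_pos _).le
    _ = K * (Real.exp (-(σ * t)) * Real.exp (σ * t)) := by ring
    _ = K := by rw [← Real.exp_add]; simp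

lemma normSigmaPos_nonneg (σ : ℝ) (φ : ℝ → E) : 0 ≤ normSigmaPos σ φ := by
  apply Real.sSup_nonneg
  rintro r ⟨t, ht, rfl⟩
  positivity

lemma normSigmaPos_le {σ K : ℝ} {φ : ℝ → E} (hK : 0 ≤ K)
    (h : ∀ t, 0 ≤ t → ‖φ t‖ ≤ K * Real.exp (σ * t)) : normSigmaPos σ φ ≤ K :=
  Real.sSup_le (mem_bound h) hK

lemma ptwise_of_bdd {σ : ℝ} {φ : ℝ → E}
    (hb : BddAbove {r : ℝ | ∃ t : ℝ, 0 ≤ t ∧ r = Real.exp (-(σ * t)) * ‖φ t‖}) :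
    ∀ s, 0 ≤ s → ‖φ s‖ ≤ normSigmaPos σ φ * Real.exp (σ * s) := by
  intro s hs
  have h1 : Real.exp (-(σ * s)) * ‖φ s‖ ≤ normSigmaPos σ φ := le_csSup hb ⟨s, hs, rfl⟩
  calc ‖φ s‖ = Real.exp (σ * s) * (Real.exp (-(σ * s)) * ‖φ s‖) := by
        rw [← mul_assoc, ← Real.exp_add]; simp
    _ ≤ Real.exp (σ * s) * normSigmaPos σ φ :=
        mul_le_mul_of_nonneg_left h1 (Real.exp_pos _).le
    _ = normSigmaPos σ φ * Real.exp (σ * s) := mul_comm _ _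

end Helpers

/-- **Lipschitz dependence of the iterates on x.** -/
theorem iterates_lipschitz_in_x
    {X Y : Type*} [NormedAddCommGroup X] [NormedSpace ℝ X] [CompleteSpace X]
    [NormedAddCommGroup Y] [NormedSpace ℝ Y] [CompleteSpace Y]
(A : X →L[ℝ] X) (B : Y →L[ℝ] Y) (α β δ σ κ : ℝ)
    (F : X × Y → X) (G : X × Y → Y)
    (z : ℝ → X × Y → X × Y) (z₀ : X × Y)
    (hA : ∀ t : ℝ, 0 ≤ t → ‖NormedSpace.exp (t • A)‖ ≤ Real.exp (α * t))
    (hB : ∀ t : ℝ, 0 ≤ t → ‖NormedSpace.exp ((-t) • B)‖ ≤ Real.exp (-(β * t)))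
    (hδ : 0 ≤ δ)
    (hLip : ∀ w₁ w₂ : X × Y, ‖((F w₁, G w₁) : X × Y) - (F w₂, G w₂)‖ ≤ δ * ‖w₁ - w₂‖)
    (hH0 : ((F 0, G 0) : X × Y) = 0)
    (hgap : 2 * δ < β - α)
    (hz0 : ∀ w : X × Y, z 0 w = w)
    (hode : ∀ (w : X × Y) (t : ℝ),
      HasDerivAt (fun τ => z τ w)
        (((A (z t w).1, B (z t w).2) : X × Y) + (F (z t w), G (z t w))) t)
    (hσ : σ ∈ Set.Ioo (α + δ) (β - δ))
    (hκ : κ = max (δ / (β - σ)) (δ / (σ - α))) :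
    ∀ j : ℕ,
      (∀ x : X, memFsigma σ (phiIter A B F G z z₀ α j x)) ∧
      (∀ x₁ x₂ : X,
        normSigmaPos σ
            (fun t => phiIter A B F G z z₀ α j x₁ t - phiIter A B F G z z₀ α j x₂ t)
          ≤ 1 / (1 - κ) * ‖x₁ - x₂‖) := by
  obtain ⟨hσ1, hσ2⟩ := hσ
  have hασ : α < σ := by linarith
  have hσβ : σ < β := by linarith
  have hβσ : (0:ℝ) < β - σ := by linarith
  have hσα : (0:ℝ) < σ - α := by linarith
  have hκ0 : 0 ≤ κ := by
    rw [hκ]; exact le_max_of_le_left (div_nonneg hδ hβσ.le)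
  have hκ1 : κ < 1 := by
    rw [hκ]
    exact max_lt (by rw [div_lt_one hβσ]; linarith) (by rw [div_lt_one hσα]; linarith)
  have h1κ : (0:ℝ) < 1 - κ := by linarith
  have hone : (1:ℝ) ≤ 1 / (1 - κ) := by rw [le_div_iff₀ h1κ]; linarith
  have hδm : δ * max (1 / (σ - α)) (1 / (β - σ)) = κ := by
    rw [hκ, mul_max_of_nonneg _ _ hδ, mul_one_div, mul_one_div, max_comm]
  have zcont : Continuous fun s : ℝ => z s z₀ :=
    continuous_iff_continuousAt.2 fun t => (hode z₀ t).continuousAt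
  have hF' : ∀ w₁ w₂ : X × Y, ‖F w₁ - F w₂‖ ≤ δ * ‖w₁ - w₂‖ := fun w₁ w₂ =>
    le_trans (norm_fst_le (((F w₁, G w₁) : X × Y) - (F w₂, G w₂))) (hLip w₁ w₂)
  have hG' : ∀ w₁ w₂ : X × Y, ‖G w₁ - G w₂‖ ≤ δ * ‖w₁ - w₂‖ := fun w₁ w₂ =>
    le_trans (norm_snd_le (((F w₁, G w₁) : X × Y) - (F w₂, G w₂))) (hLip w₁ w₂)
  have hFcont : Continuous F := by
    refine LipschitzWith.continuous (K := δ.toNNReal) ?_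
    apply LipschitzWith.of_dist_le_mul
    intro a b
    rw [dist_eq_norm, dist_eq_norm, Real.coe_toNNReal δ hδ]
    exact hF' a b
  have hGcont : Continuous G := by
    refine LipschitzWith.continuous (K := δ.toNNReal) ?_
    apply LipschitzWith.of_dist_le_mul
    intro a b
    rw [dist_eq_norm, dist_eq_norm, Real.coe_toNNReal δ hδ]
    exact hG' a b
  have hnorm0 : ∀ (v : X) (t : ℝ), 0 ≤ t →
      ‖((Real.exp (α * t) • v, (0 : Y)) : X × Y)‖ ≤ ‖v‖ * Real.exp (σ * t) := by
    intro v t ht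
    have h1 : ‖((Real.exp (α * t) • v, (0 : Y)) : X × Y)‖ = Real.exp (α * t) * ‖v‖ := by
      rw [Prod.norm_def]
      simp only [norm_zero, norm_smul, Real.norm_eq_abs, Real.abs_exp]
      exact max_eq_left (by positivity)
    rw [h1]
    calc Real.exp (α * t) * ‖v‖ ≤ Real.exp (σ * t) * ‖v‖ :=
          mul_le_mul_of_nonneg_right
            (Real.exp_le_exp.2 (mul_le_mul_of_nonneg_right hασ.le ht)) (norm_nonneg v)
      _ = ‖v‖ * Real.exp (σ * t) := mul_comm _ _
  intro j
  induction j with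
  | zero =>
    constructor
    · intro x
      constructor
      · simp only [phiIter]
        exact (((Real.continuous_exp.comp (continuous_const.mul continuous_id)).smul
          continuous_const).prodMk continuous_const).continuousOn
      · refine ⟨‖x - z₀.1‖, ?_⟩
        rintro r hr
        refine mem_bound ?_ r hr
        intro t ht
        simp only [phiIter]
        exact hnorm0 _ t ht
    · intro x₁ x₂
      simp only [phiIter]
      have hb : normSigmaPos σ (fun t =>
          ((Real.exp (α * t) • (x₁ - z₀.1), (0:Y)) : X × Y)
            - (Real.exp (α * t) • (x₂ - z₀.1), (0:Y))) ≤ ‖x₁ - x₂‖ := by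
        apply normSigmaPos_le (norm_nonneg _)
        intro t ht
        have heq : ((Real.exp (α * t) • (x₁ - z₀.1), (0 : Y)) : X × Y)
            - (Real.exp (α * t) • (x₂ - z₀.1), (0 : Y))
            = (Real.exp (α * t) • (x₁ - x₂), (0 : Y)) := by
          rw [Prod.mk_sub_mk, ← smul_sub, sub_sub_sub_cancel_right, sub_zero]
        rw [heq]
        exact hnorm0 _ t ht
      exact le_trans hb (le_mul_of_one_le_left (norm_nonneg _) hone)
  | succ j ih =>
    obtain ⟨memj, lipj⟩ := ih
    have hrepr : ∀ x : X, phiIter A B F G z z₀ α (j+1) x = fun t =>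
        ((NormedSpace.exp (t • A) x + ∫ s in (0:ℝ)..t, NormedSpace.exp ((t - s) • A)
            (F (phiIter A B F G z z₀ α j x s + z s z₀) - F (z s z₀)),
          -∫ s in Set.Ioi t, NormedSpace.exp ((t - s) • B)
            (G (phiIter A B F G z z₀ α j x s + z s z₀) - G (z s z₀))) : X × Y) := by
      intro x; funext t; simp only [phiIter, Tmap]
    have hbnd : ∀ x : X, ∀ s, 0 ≤ s → ‖phiIter A B F G z z₀ α j x s‖
        ≤ normSigmaPos σ (phiIter A B F G z z₀ α j x) * Real.exp (σ * s) :=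
      fun x => ptwise_of_bdd (memj x).2
    have hg1 : ∀ x : X, ∀ s, 0 ≤ s →
        ‖F (phiIter A B F G z z₀ α j x s + z s z₀) - F (z s z₀)‖
        ≤ (δ * normSigmaPos σ (phiIter A B F G z z₀ α j x)) * Real.exp (σ * s) := by
      intro x s hs
      calc ‖F (phiIter A B F G z z₀ α j x s + z s z₀) - F (z s z₀)‖
          ≤ δ * ‖(phiIter A B F G z z₀ α j x s + z s z₀) - z s z₀‖ := hF' _ _
        _ = δ * ‖phiIter A B F G z z₀ α j x s‖ := by rw [add_sub_cancel_right]
        _ ≤ δ * (normSigmaPos σ (phiIter A B F G z z₀ α j x) * Real.exp (σ * s)) :=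
            mul_le_mul_of_nonneg_left (hbnd x s hs) hδ
        _ = (δ * normSigmaPos σ (phiIter A B F G z z₀ α j x)) * Real.exp (σ * s) := by ring
    have hg2 : ∀ x : X, ∀ s, 0 ≤ s →
        ‖G (phiIter A B F G z z₀ α j x s + z s z₀) - G (z s z₀)‖
        ≤ (δ * normSigmaPos σ (phiIter A B F G z z₀ α j x)) * Real.exp (σ * s) := by
      intro x s hs
      calc ‖G (phiIter A B F G z z₀ α j x s + z s z₀) - G (z s z₀)‖
          ≤ δ * ‖(phiIter A B F G z z₀ α j x s + z s z₀) - z s z₀‖ := hG' _ _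
        _ = δ * ‖phiIter A B F G z z₀ α j x s‖ := by rw [add_sub_cancel_right]
        _ ≤ δ * (normSigmaPos σ (phiIter A B F G z z₀ α j x) * Real.exp (σ * s)) :=
            mul_le_mul_of_nonneg_left (hbnd x s hs) hδ
        _ = (δ * normSigmaPos σ (phiIter A B F G z z₀ α j x)) * Real.exp (σ * s) := by ring
    have hg1c : ∀ x : X, ContinuousOn
        (fun s => F (phiIter A B F G z z₀ α j x s + z s z₀) - F (z s z₀)) (Set.Ici 0) :=
      fun x => (hFcont.comp_continuousOn ((memj x).1.add zcont.continuousOn)).sub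
        (hFcont.comp zcont).continuousOn
    have hg2c : ∀ x : X, ContinuousOn
        (fun s => G (phiIter A B F G z z₀ α j x s + z s z₀) - G (z s z₀)) (Set.Ici 0) :=
      fun x => (hGcont.comp_continuousOn ((memj x).1.add zcont.continuousOn)).sub
        (hGcont.comp zcont).continuousOn
    have hIntB : ∀ x : X, ∀ t : ℝ, 0 ≤ t → IntegrableOn (fun s =>
        NormedSpace.exp ((t - s) • B)
          (G (phiIter A B F G z z₀ α j x s + z s z₀) - G (z s z₀))) (Set.Ioi t) :=
      fun x t ht => integrableB B hB hσβ (hg2c x) (hg2 x) ht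
    have hIIA : ∀ x : X, ∀ t : ℝ, 0 ≤ t → IntervalIntegrable (fun s =>
        NormedSpace.exp ((t - s) • A)
          (F (phiIter A B F G z z₀ α j x s + z s z₀) - F (z s z₀))) volume 0 t := by
      intro x t ht
      apply ContinuousOn.intervalIntegrable
      rw [Set.uIcc_of_le ht]
      exact (((exp_cont A).comp (continuous_const.sub continuous_id)).continuousOn).clm_apply
        ((hg1c x).mono Set.Icc_subset_Ici_self)
    constructor
    · intro x
      obtain ⟨hcont, hbound⟩ := core A B hA hB hασ hσβ
        (mul_nonneg hδ (normSigmaPos_nonneg _ _)) (hg1c x) (hg2c x) (hg1 x) (hg2 x) x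
      constructor
      · rw [hrepr x]; exact hcont
      · refine ⟨‖x‖ + δ * normSigmaPos σ (phiIter A B F G z z₀ α j x) *
          max (1 / (σ - α)) (1 / (β - σ)), ?_⟩
        apply mem_bound
        intro t ht
        rw [hrepr x]
        exact hbound t ht
    · intro x₁ x₂
      have hN0 : (0:ℝ) ≤ normSigmaPos σ
          (fun t => phiIter A B F G z z₀ α j x₁ t - phiIter A B F G z z₀ α j x₂ t) :=
        normSigmaPos_nonneg _ _
      set N := normSigmaPos σ
          (fun t => phiIter A B F G z z₀ α j x₁ t - phiIter A B F G z z₀ α j x₂ t) with hN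
      have hNbdd : BddAbove {r : ℝ | ∃ t : ℝ, 0 ≤ t ∧ r = Real.exp (-(σ * t)) *
          ‖(fun t => phiIter A B F G z z₀ α j x₁ t - phiIter A B F G z z₀ α j x₂ t) t‖} := by
        refine ⟨normSigmaPos σ (phiIter A B F G z z₀ α j x₁)
          + normSigmaPos σ (phiIter A B F G z z₀ α j x₂), ?_⟩
        intro r hr
        refine mem_bound ?_ r hr
        intro t ht
        calc ‖phiIter A B F G z z₀ α j x₁ t - phiIter A B F G z z₀ α j x₂ t‖
            ≤ ‖phiIter A B F G z z₀ α j x₁ t‖ + ‖phiIter A B F G z z₀ α j x₂ t‖ :=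
              norm_sub_le _ _
          _ ≤ normSigmaPos σ (phiIter A B F G z z₀ α j x₁) * Real.exp (σ * t)
              + normSigmaPos σ (phiIter A B F G z z₀ α j x₂) * Real.exp (σ * t) :=
              add_le_add (hbnd x₁ t ht) (hbnd x₂ t ht)
          _ = (normSigmaPos σ (phiIter A B F G z z₀ α j x₁)
              + normSigmaPos σ (phiIter A B F G z z₀ α j x₂)) * Real.exp (σ * t) := by ring
      have hNpt : ∀ s, 0 ≤ s →
          ‖phiIter A B F G z z₀ α j x₁ s - phiIter A B F G z z₀ α j x₂ s‖
            ≤ N * Real.exp (σ * s) := fun s hs => ptwise_of_bdd hNbdd s hs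
      have hg1d : ∀ s, 0 ≤ s →
          ‖F (phiIter A B F G z z₀ α j x₁ s + z s z₀)
            - F (phiIter A B F G z z₀ α j x₂ s + z s z₀)‖ ≤ (δ * N) * Real.exp (σ * s) := by
        intro s hs
        calc ‖F (phiIter A B F G z z₀ α j x₁ s + z s z₀)
            - F (phiIter A B F G z z₀ α j x₂ s + z s z₀)‖
            ≤ δ * ‖(phiIter A B F G z z₀ α j x₁ s + z s z₀)
              - (phiIter A B F G z z₀ α j x₂ s + z s z₀)‖ := hF' _ _
          _ = δ * ‖phiIter A B F G z z₀ α j x₁ s - phiIter A B F G z z₀ α j x₂ s‖ := by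
              rw [add_sub_add_right_eq_sub]
          _ ≤ δ * (N * Real.exp (σ * s)) := mul_le_mul_of_nonneg_left (hNpt s hs) hδ
          _ = (δ * N) * Real.exp (σ * s) := by ring
      have hg2d : ∀ s, 0 ≤ s →
          ‖G (phiIter A B F G z z₀ α j x₁ s + z s z₀)
            - G (phiIter A B F G z z₀ α j x₂ s + z s z₀)‖ ≤ (δ * N) * Real.exp (σ * s) := by
        intro s hs
        calc ‖G (phiIter A B F G z z₀ α j x₁ s + z s z₀)
            - G (phiIter A B F G z z₀ α j x₂ s + z s z₀)‖
            ≤ δ * ‖(phiIter A B F G z z₀ α j x₁ s + z s z₀)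
              - (phiIter A B F G z z₀ α j x₂ s + z s z₀)‖ := hG' _ _
          _ = δ * ‖phiIter A B F G z z₀ α j x₁ s - phiIter A B F G z z₀ α j x₂ s‖ := by
              rw [add_sub_add_right_eq_sub]
          _ ≤ δ * (N * Real.exp (σ * s)) := mul_le_mul_of_nonneg_left (hNpt s hs) hδ
          _ = (δ * N) * Real.exp (σ * s) := by ring
      have hg1dc : ContinuousOn (fun s => F (phiIter A B F G z z₀ α j x₁ s + z s z₀)
          - F (phiIter A B F G z z₀ α j x₂ s + z s z₀)) (Set.Ici 0) :=
        (hFcont.comp_continuousOn ((memj x₁).1.add zcont.continuousOn)).sub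
          (hFcont.comp_continuousOn ((memj x₂).1.add zcont.continuousOn))
      have hg2dc : ContinuousOn (fun s => G (phiIter A B F G z z₀ α j x₁ s + z s z₀)
          - G (phiIter A B F G z z₀ α j x₂ s + z s z₀)) (Set.Ici 0) :=
        (hGcont.comp_continuousOn ((memj x₁).1.add zcont.continuousOn)).sub
          (hGcont.comp_continuousOn ((memj x₂).1.add zcont.continuousOn))
      obtain ⟨-, hbound⟩ := core A B hA hB hασ hσβ (mul_nonneg hδ hN0) hg1dc hg2dc hg1d hg2d
        (x₁ - x₂)
      have heq : ∀ t : ℝ, 0 ≤ t →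
          phiIter A B F G z z₀ α (j+1) x₁ t - phiIter A B F G z z₀ α (j+1) x₂ t =
          ((NormedSpace.exp (t • A) (x₁ - x₂) + ∫ s in (0:ℝ)..t,
              NormedSpace.exp ((t - s) • A) (F (phiIter A B F G z z₀ α j x₁ s + z s z₀)
                - F (phiIter A B F G z z₀ α j x₂ s + z s z₀)),
            -∫ s in Set.Ioi t, NormedSpace.exp ((t - s) • B)
              (G (phiIter A B F G z z₀ α j x₁ s + z s z₀)
                - G (phiIter A B F G z z₀ α j x₂ s + z s z₀))) : X × Y) := by
        intro t ht
        rw [hrepr x₁, hrepr x₂]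
        simp only
        rw [Prod.mk_sub_mk]
        have hfst : (NormedSpace.exp (t • A) x₁ + ∫ s in (0:ℝ)..t,
            NormedSpace.exp ((t - s) • A) (F (phiIter A B F G z z₀ α j x₁ s + z s z₀)
              - F (z s z₀)))
            - (NormedSpace.exp (t • A) x₂ + ∫ s in (0:ℝ)..t,
            NormedSpace.exp ((t - s) • A) (F (phiIter A B F G z z₀ α j x₂ s + z s z₀)
              - F (z s z₀)))
            = NormedSpace.exp (t • A) (x₁ - x₂) + ∫ s in (0:ℝ)..t,
              NormedSpace.exp ((t - s) • A) (F (phiIter A B F G z z₀ α j x₁ s + z s z₀)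
                - F (phiIter A B F G z z₀ α j x₂ s + z s z₀)) := by
          rw [show ∀ a b c d : X, (a + b) - (c + d) = (a - c) + (b - d) from
            fun a b c d => by abel]
          congr 1
          · exact (map_sub _ _ _).symm
          · rw [← intervalIntegral.integral_sub (hIIA x₁ t ht) (hIIA x₂ t ht)]
            apply intervalIntegral.integral_congr
            intro s _
            dsimp only
            rw [← map_sub]
            congr 1
            exact sub_sub_sub_cancel_right _ _ _
        have hsnd : (-∫ s in Set.Ioi t, NormedSpace.exp ((t - s) • B)
            (G (phiIter A B F G z z₀ α j x₁ s + z s z₀) - G (z s z₀)))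
            - (-∫ s in Set.Ioi t, NormedSpace.exp ((t - s) • B)
            (G (phiIter A B F G z z₀ α j x₂ s + z s z₀) - G (z s z₀)))
            = -∫ s in Set.Ioi t, NormedSpace.exp ((t - s) • B)
              (G (phiIter A B F G z z₀ α j x₁ s + z s z₀)
                - G (phiIter A B F G z z₀ α j x₂ s + z s z₀)) := by
          rw [show ∀ a b : Y, -a - -b = -(a - b) from fun a b => by abel]
          congr 1
          rw [← integral_sub (hIntB x₁ t ht) (hIntB x₂ t ht)]
          have : (fun s => NormedSpace.exp ((t - s) • B)
              (G (phiIter A B F G z z₀ α j x₁ s + z s z₀) - G (z s z₀))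
              - NormedSpace.exp ((t - s) • B)
              (G (phiIter A B F G z z₀ α j x₂ s + z s z₀) - G (z s z₀)))
              = fun s => NormedSpace.exp ((t - s) • B)
              (G (phiIter A B F G z z₀ α j x₁ s + z s z₀)
                - G (phiIter A B F G z z₀ α j x₂ s + z s z₀)) := by
            funext s
            rw [← map_sub]
            congr 1
            exact sub_sub_sub_cancel_right _ _ _
          rw [this]
        rw [hfst, hsnd]
      have hmain : normSigmaPos σ (fun t =>
          phiIter A B F G z z₀ α (j+1) x₁ t - phiIter A B F G z z₀ α (j+1) x₂ t)
          ≤ ‖x₁ - x₂‖ + κ * N := by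
        apply Real.sSup_le _ (by positivity)
        rintro r ⟨t, ht, rfl⟩
        show Real.exp (-(σ * t)) *
          ‖phiIter A B F G z z₀ α (j+1) x₁ t - phiIter A B F G z z₀ α (j+1) x₂ t‖
          ≤ ‖x₁ - x₂‖ + κ * N
        rw [heq t ht]
        calc Real.exp (-(σ * t)) * ‖((NormedSpace.exp (t • A) (x₁ - x₂) + ∫ s in (0:ℝ)..t,
              NormedSpace.exp ((t - s) • A) (F (phiIter A B F G z z₀ α j x₁ s + z s z₀)
                - F (phiIter A B F G z z₀ α j x₂ s + z s z₀)),
            -∫ s in Set.Ioi t, NormedSpace.exp ((t - s) • B)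
              (G (phiIter A B F G z z₀ α j x₁ s + z s z₀)
                - G (phiIter A B F G z z₀ α j x₂ s + z s z₀))) : X × Y)‖
            ≤ Real.exp (-(σ * t)) * ((‖x₁ - x₂‖ + δ * N * max (1 / (σ - α)) (1 / (β - σ)))
              * Real.exp (σ * t)) :=
              mul_le_mul_of_nonneg_left (hbound t ht) (Real.exp_pos _).le
          _ = (‖x₁ - x₂‖ + δ * N * max (1 / (σ - α)) (1 / (β - σ)))
              * (Real.exp (-(σ * t)) * Real.exp (σ * t)) := by ring
          _ = ‖x₁ - x₂‖ + δ * N * max (1 / (σ - α)) (1 / (β - σ)) := by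
              rw [← Real.exp_add]; simp
          _ = ‖x₁ - x₂‖ + κ * N := by rw [← hδm]; ring
      refine hmain.trans ?_
      have h2 : κ * N ≤ κ * (1 / (1 - κ) * ‖x₁ - x₂‖) :=
        mul_le_mul_of_nonneg_left (lipj x₁ x₂) hκ0
      have h3 : ‖x₁ - x₂‖ + κ * (1 / (1 - κ) * ‖x₁ - x₂‖) = 1 / (1 - κ) * ‖x₁ - x₂‖ := by
        field_simp
        ring
      linarith
end
end

section
/- (Lipschitz bound for the approximate stable-leaf maps Φ^j.) For every j ≥ 1 and all x₁, x₂ ∈ X one has ‖Φ^j(x₁) − Φ^j(x₂)‖ ≤ (δ/(β−σ)) · (1/(1−κ)) · ‖x₁ − x₂‖. -/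
open MeasureTheory

noncomputable section

variable {X Y : Type*} [NormedAddCommGroup X] [NormedSpace ℝ X] [CompleteSpace X]
  [NormedAddCommGroup Y] [NormedSpace ℝ Y] [CompleteSpace Y]

instance myRatNormedAlgebraCLM {E : Type*} [NormedAddCommGroup E] [NormedSpace ℝ E] :
    NormedAlgebra ℚ (E →L[ℝ] E) :=
  NormedAlgebra.restrictScalars ℚ ℝ _

section AuxLemmas
open MeasureTheory Set Real

lemma my_integral_exp_neg_Ioi {c : ℝ} (hc : 0 < c) (t : ℝ) :
    ∫ s in Set.Ioi t, Real.exp (-(c * s)) = Real.exp (-(c * t)) / c := by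
  have hd : ∀ x ∈ Set.Ici t, HasDerivAt (fun s => -Real.exp (-(c * s)) / c)
      (Real.exp (-(c * x))) x := by
    intro x _
    have h1 : HasDerivAt (fun s => -(c * s)) (-c) x := by
      simpa using (hasDerivAt_id x).const_mul (-c)
    have h2 := (h1.exp).neg.div_const c
    refine h2.congr_deriv ?_
    field_simp
  have hint : IntegrableOn (fun s => Real.exp (-(c * s))) (Set.Ioi t) := by
    simpa [neg_mul] using exp_neg_integrableOn_Ioi t hc
  have htend : Filter.Tendsto (fun s => -Real.exp (-(c * s)) / c) Filter.atTop (nhds 0) := by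
    have h3 : Filter.Tendsto (fun s : ℝ => -(c * s)) Filter.atTop Filter.atBot := by
      simpa [neg_mul] using
        (Filter.tendsto_neg_atBot_iff.mpr (Filter.Tendsto.const_mul_atTop hc Filter.tendsto_id))
    have h4 := (Real.tendsto_exp_atBot.comp h3).neg.div_const c
    simpa using h4
  have := MeasureTheory.integral_Ioi_of_hasDerivAt_of_tendsto
    ((hd t (Set.self_mem_Ici)).continuousAt.continuousWithinAt)
    (fun x hx => hd x (Set.mem_Ici.mpr (le_of_lt hx))) hint htend
  rw [this]
  field_simp
  ring

lemma my_intervalIntegral_exp {c : ℝ} (hc : c ≠ 0) (t : ℝ) :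
    ∫ s in (0:ℝ)..t, Real.exp (c * s) = (Real.exp (c * t) - 1) / c := by
  have := intervalIntegral.integral_comp_mul_left (a := (0:ℝ)) (b := t)
    (fun x => Real.exp x) hc
  rw [this]
  simp [integral_exp, smul_eq_mul]
  field_simp



lemma my_ioi {E : Type*} [NormedAddCommGroup E] [NormedSpace ℝ E] [CompleteSpace E]
    (B : E →L[ℝ] E) (β σ K : ℝ) (hσβ : σ < β) (hK : 0 ≤ K)
    (hB : ∀ t : ℝ, 0 ≤ t → ‖NormedSpace.exp ((-t) • B)‖ ≤ Real.exp (-(β * t)))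
    (g : ℝ → E) (hg : ContinuousOn g (Set.Ici 0))
    (hbd : ∀ s, 0 ≤ s → ‖g s‖ ≤ K * Real.exp (σ * s))
    {t : ℝ} (ht : 0 ≤ t) :
    IntegrableOn (fun s => NormedSpace.exp ((t - s) • B) (g s)) (Set.Ioi t) ∧
      ‖∫ s in Set.Ioi t, NormedSpace.exp ((t - s) • B) (g s)‖
        ≤ K / (β - σ) * Real.exp (σ * t) := by
  have hβσ : (0:ℝ) < β - σ := by linarith
  -- pointwise norm bound
  have hptw : ∀ s ∈ Set.Ioi t, ‖NormedSpace.exp ((t - s) • B) (g s)‖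
      ≤ (K * Real.exp (β * t)) * Real.exp (-(β - σ) * s) := by
    intro s hs
    have hst : t ≤ s := le_of_lt hs
    have h1 : ‖NormedSpace.exp ((t - s) • B)‖ ≤ Real.exp (-(β * (s - t))) := by
      have := hB (s - t) (by linarith)
      rwa [show (-(s - t)) • B = (t - s) • B by ring_nf] at this
    calc ‖NormedSpace.exp ((t - s) • B) (g s)‖
        ≤ ‖NormedSpace.exp ((t - s) • B)‖ * ‖g s‖ :=
          ContinuousLinearMap.le_opNorm _ _
      _ ≤ Real.exp (-(β * (s - t))) * (K * Real.exp (σ * s)) := by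
          apply mul_le_mul h1 (hbd s (le_trans ht hst)) (norm_nonneg _) (Real.exp_nonneg _)
      _ = (K * Real.exp (β * t)) * Real.exp (-(β - σ) * s) := by
          rw [show Real.exp (-(β * (s - t))) * (K * Real.exp (σ * s))
              = K * (Real.exp (-(β * (s - t))) * Real.exp (σ * s)) by ring,
            ← Real.exp_add, show -(β * (s - t)) + σ * s = β * t + -(β - σ) * s by ring,
            Real.exp_add]
          ring
  -- dominating function integrable
  have hdom : IntegrableOn (fun s => (K * Real.exp (β * t)) * Real.exp (-(β - σ) * s))
      (Set.Ioi t) := (exp_neg_integrableOn_Ioi t hβσ).const_mul _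
  -- measurability
  have hmeas : AEStronglyMeasurable (fun s => NormedSpace.exp ((t - s) • B) (g s))
      (volume.restrict (Set.Ioi t)) := by
    have hcO : ContinuousOn (fun s => NormedSpace.exp ((t - s) • B) (g s)) (Set.Ici 0) := by
      apply ContinuousOn.clm_apply _ hg
      exact ((NormedSpace.exp_continuous).comp
        ((continuous_const.sub continuous_id).smul continuous_const)).continuousOn
    exact (hcO.mono (fun s hs => le_trans ht (le_of_lt hs))).aestronglyMeasurable
      measurableSet_Ioi
  have hint : IntegrableOn (fun s => NormedSpace.exp ((t - s) • B) (g s)) (Set.Ioi t) := by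
    refine Integrable.mono' hdom hmeas ?_
    exact (ae_restrict_iff' measurableSet_Ioi).mpr (Filter.Eventually.of_forall hptw)
  refine ⟨hint, ?_⟩
  have hval : ∫ s in Set.Ioi t, (K * Real.exp (β * t)) * Real.exp (-(β - σ) * s)
      = K / (β - σ) * Real.exp (σ * t) := by
    rw [MeasureTheory.integral_const_mul]
    have := my_integral_exp_neg_Ioi (c := β - σ) hβσ t
    rw [show (fun s => Real.exp (-(β - σ) * s)) = fun s => Real.exp (-((β - σ) * s)) by
      funext s; ring_nf, this]
    rw [show K * Real.exp (β * t) * (Real.exp (-((β - σ) * t)) / (β - σ))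
        = K / (β - σ) * (Real.exp (β * t) * Real.exp (-((β - σ) * t))) by ring,
      ← Real.exp_add, show β * t + -((β - σ) * t) = σ * t by ring]
  calc ‖∫ s in Set.Ioi t, NormedSpace.exp ((t - s) • B) (g s)‖
      ≤ ∫ s in Set.Ioi t, (K * Real.exp (β * t)) * Real.exp (-(β - σ) * s) :=
        MeasureTheory.norm_integral_le_of_norm_le hdom
          ((ae_restrict_iff' measurableSet_Ioi).mpr (Filter.Eventually.of_forall hptw))
    _ = K / (β - σ) * Real.exp (σ * t) := hval

lemma my_interval {E : Type*} [NormedAddCommGroup E] [NormedSpace ℝ E] [CompleteSpace E]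
    (A : E →L[ℝ] E) (α σ K : ℝ) (hασ : α < σ) (hK : 0 ≤ K)
    (hA : ∀ t : ℝ, 0 ≤ t → ‖NormedSpace.exp (t • A)‖ ≤ Real.exp (α * t))
    (u : ℝ → E) (hu : ContinuousOn u (Set.Ici 0))
    (hbd : ∀ s, 0 ≤ s → ‖u s‖ ≤ K * Real.exp (σ * s))
    {t : ℝ} (ht : 0 ≤ t) :
    IntervalIntegrable (fun s => NormedSpace.exp ((t - s) • A) (u s)) volume 0 t ∧
      ‖∫ s in (0:ℝ)..t, NormedSpace.exp ((t - s) • A) (u s)‖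
        ≤ K / (σ - α) * Real.exp (σ * t) := by
  have hσα : (0:ℝ) < σ - α := by linarith
  have hcO : ContinuousOn (fun s => NormedSpace.exp ((t - s) • A) (u s)) (Set.Ici 0) := by
    apply ContinuousOn.clm_apply _ hu
    exact ((NormedSpace.exp_continuous).comp
      ((continuous_const.sub continuous_id).smul continuous_const)).continuousOn
  have hii : IntervalIntegrable (fun s => NormedSpace.exp ((t - s) • A) (u s)) volume 0 t := by
    apply ContinuousOn.intervalIntegrable
    apply hcO.mono
    rw [Set.uIcc_of_le ht]
    exact fun s hs => hs.1
  refine ⟨hii, ?_⟩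
  set C : ℝ := K * Real.exp (α * t) with hC
  have hgii : IntervalIntegrable (fun s => C * Real.exp ((σ - α) * s)) volume 0 t :=
    (continuous_const.mul (Real.continuous_exp.comp
      (continuous_const.mul continuous_id))).intervalIntegrable 0 t
  have hptw : ∀ᵐ s ∂(volume.restrict (Set.uIoc 0 t)),
      ‖NormedSpace.exp ((t - s) • A) (u s)‖ ≤ C * Real.exp ((σ - α) * s) := by
    refine (ae_restrict_iff' measurableSet_uIoc).mpr (Filter.Eventually.of_forall ?_)
    intro s hs
    rw [Set.uIoc_of_le ht] at hs
    have hs0 : 0 ≤ s := le_of_lt hs.1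
    have hst : s ≤ t := hs.2
    calc ‖NormedSpace.exp ((t - s) • A) (u s)‖
        ≤ ‖NormedSpace.exp ((t - s) • A)‖ * ‖u s‖ := ContinuousLinearMap.le_opNorm _ _
      _ ≤ Real.exp (α * (t - s)) * (K * Real.exp (σ * s)) :=
          mul_le_mul (hA (t - s) (by linarith)) (hbd s hs0) (norm_nonneg _) (Real.exp_nonneg _)
      _ = C * Real.exp ((σ - α) * s) := by
          rw [show Real.exp (α * (t - s)) * (K * Real.exp (σ * s))
              = K * (Real.exp (α * (t - s)) * Real.exp (σ * s)) by ring,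
            ← Real.exp_add, show α * (t - s) + σ * s = α * t + (σ - α) * s by ring,
            Real.exp_add, hC]
          ring
  have hb := intervalIntegral.norm_integral_le_abs_of_norm_le hptw hgii
  refine le_trans hb ?_
  have hval : ∫ s in (0:ℝ)..t, C * Real.exp ((σ - α) * s)
      = C * ((Real.exp ((σ - α) * t) - 1) / (σ - α)) := by
    rw [intervalIntegral.integral_const_mul, my_intervalIntegral_exp (ne_of_gt hσα)]
  rw [hval, abs_of_nonneg]
  · have h1 : Real.exp ((σ - α) * t) - 1 ≤ Real.exp ((σ - α) * t) := by linarith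
    calc C * ((Real.exp ((σ - α) * t) - 1) / (σ - α))
        ≤ C * (Real.exp ((σ - α) * t) / (σ - α)) := by
          apply mul_le_mul_of_nonneg_left _ (mul_nonneg hK (Real.exp_nonneg _))
          gcongr
      _ = K / (σ - α) * Real.exp (σ * t) := by
          rw [hC, show K * Real.exp (α * t) * (Real.exp ((σ - α) * t) / (σ - α))
              = K / (σ - α) * (Real.exp (α * t) * Real.exp ((σ - α) * t)) by ring,
            ← Real.exp_add, show α * t + (σ - α) * t = σ * t by ring]
  · have : 1 ≤ Real.exp ((σ - α) * t) := by
      rw [show (1:ℝ) = Real.exp 0 by simp]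
      exact Real.exp_le_exp.mpr (mul_nonneg (le_of_lt hσα) ht)
    exact mul_nonneg (mul_nonneg hK (Real.exp_nonneg _))
      (div_nonneg (by linarith) (le_of_lt hσα))

lemma my_contOn_primitive {E : Type*} [NormedAddCommGroup E] [NormedSpace ℝ E]
    (v : ℝ → E) (hv : ContinuousOn v (Set.Ici 0)) :
    ContinuousOn (fun t => ∫ s in (0:ℝ)..t, v s) (Set.Ici 0) := by
  set w : ℝ → E := fun s => v (max s 0) with hw
  have hwc : Continuous w :=
    hv.comp_continuous (continuous_id.max continuous_const) (fun s => le_max_right s 0)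
  have hcont : Continuous fun t => ∫ s in (0:ℝ)..t, w s :=
    intervalIntegral.continuous_primitive (fun a b => (hwc.intervalIntegrable a b)) 0
  refine hcont.continuousOn.congr ?_
  intro t ht
  refine intervalIntegral.integral_congr ?_
  intro s hs
  rw [Set.uIcc_of_le (Set.mem_Ici.mp ht)] at hs
  simp [hw, max_eq_left hs.1]


set_option synthInstance.maxHeartbeats 1000000 in
lemma my_exp_split {E : Type*} [NormedAddCommGroup E] [NormedSpace ℝ E] [CompleteSpace E]
    (A : E →L[ℝ] E) (t s : ℝ) (v : E) :
    NormedSpace.exp ((t - s) • A) v =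
      NormedSpace.exp (t • A) (NormedSpace.exp ((-s) • A) v) := by
  have hc : Commute (t • A) ((-s) • A) := by
    unfold Commute SemiconjBy
    rw [smul_mul_assoc, mul_smul_comm, smul_smul, smul_mul_assoc, mul_smul_comm, smul_smul,
      mul_comm t]
  have h2 : (t - s) • A = t • A + (-s) • A := by
    rw [← add_smul]; ring_nf
  rw [h2, NormedSpace.exp_add_of_commute hc]
  rfl



lemma my_Tmap_zero (A : X →L[ℝ] X) (B : Y →L[ℝ] Y)
    (F : X × Y → X) (G : X × Y → Y) (z : ℝ → X × Y → X × Y) (z₀ : X × Y) (t : ℝ) :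
    Tmap A B F G z z₀ (fun _ => (0 : X × Y)) 0 t = 0 := by
  simp [Tmap, Prod.ext_iff]

set_option maxHeartbeats 1000000 in
lemma my_Tcont (A : X →L[ℝ] X) (B : Y →L[ℝ] Y) (β σ δ C : ℝ)
    (F : X × Y → X) (G : X × Y → Y) (z : ℝ → X × Y → X × Y) (z₀ : X × Y)
    (φ : ℝ → X × Y) (x : X)
    (hσβ : σ < β) (hC : 0 ≤ C) (hδ : 0 ≤ δ)
    (hB : ∀ t : ℝ, 0 ≤ t → ‖NormedSpace.exp ((-t) • B)‖ ≤ Real.exp (-(β * t)))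
    (hG : ∀ a b : X × Y, ‖G a - G b‖ ≤ δ * ‖a - b‖)
    (hFc : Continuous F) (hGc : Continuous G) (hzc : Continuous fun s => z s z₀)
    (hφc : ContinuousOn φ (Set.Ici 0))
    (hφb : ∀ s, 0 ≤ s → ‖φ s‖ ≤ C * Real.exp (σ * s)) :
    ContinuousOn (fun t => Tmap A B F G z z₀ φ x t) (Set.Ici 0) := by
  set u₁ : ℝ → X := fun s => F (φ s + z s z₀) - F (z s z₀) with hu₁
  set g₁ : ℝ → Y := fun s => G (φ s + z s z₀) - G (z s z₀) with hg₁
  have hu₁c : ContinuousOn u₁ (Set.Ici 0) :=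
    (hFc.comp_continuousOn (hφc.add hzc.continuousOn)).sub
      (hFc.comp_continuousOn hzc.continuousOn)
  have hg₁c : ContinuousOn g₁ (Set.Ici 0) :=
    (hGc.comp_continuousOn (hφc.add hzc.continuousOn)).sub
      (hGc.comp_continuousOn hzc.continuousOn)
  have hgb₁ : ∀ s, 0 ≤ s → ‖g₁ s‖ ≤ (δ * C) * Real.exp (σ * s) := by
    intro s hs
    calc ‖g₁ s‖ ≤ δ * ‖(φ s + z s z₀) - z s z₀‖ := hG _ _
      _ = δ * ‖φ s‖ := by rw [add_sub_cancel_right]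
      _ ≤ δ * (C * Real.exp (σ * s)) := mul_le_mul_of_nonneg_left (hφb s hs) hδ
      _ = (δ * C) * Real.exp (σ * s) := by ring
  -- continuity of t ↦ exp (t • M)
  have hexpA : Continuous fun t : ℝ => NormedSpace.exp (t • A) :=
    NormedSpace.exp_continuous.comp (continuous_id.smul continuous_const)
  have hexpB : Continuous fun t : ℝ => NormedSpace.exp (t • B) :=
    NormedSpace.exp_continuous.comp (continuous_id.smul continuous_const)
  -- first component
  set h₁ : ℝ → X := fun s => NormedSpace.exp ((-s) • A) (u₁ s) with hh₁
  have hh₁c : ContinuousOn h₁ (Set.Ici 0) := by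
    apply ContinuousOn.clm_apply _ hu₁c
    exact (NormedSpace.exp_continuous.comp
      ((continuous_id.neg).smul continuous_const)).continuousOn
  have hfstc : ContinuousOn
      (fun t => NormedSpace.exp (t • A) x
        + ∫ s in (0:ℝ)..t, NormedSpace.exp ((t - s) • A) (u₁ s)) (Set.Ici 0) := by
    have heq : ∀ t : ℝ, 0 ≤ t →
        (∫ s in (0:ℝ)..t, NormedSpace.exp ((t - s) • A) (u₁ s))
          = NormedSpace.exp (t • A) (∫ s in (0:ℝ)..t, h₁ s) := by
      intro t ht
      have hint : IntervalIntegrable h₁ volume 0 t := by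
        apply ContinuousOn.intervalIntegrable
        apply hh₁c.mono
        rw [Set.uIcc_of_le ht]
        exact fun s hs => hs.1
      rw [show (fun s => NormedSpace.exp ((t - s) • A) (u₁ s))
          = fun s => NormedSpace.exp (t • A) (h₁ s) from funext fun s => my_exp_split A t s _]
      exact (NormedSpace.exp (t • A)).intervalIntegral_comp_comm hint
    have : ContinuousOn
        (fun t => NormedSpace.exp (t • A) x
          + NormedSpace.exp (t • A) (∫ s in (0:ℝ)..t, h₁ s)) (Set.Ici 0) := by
      apply ContinuousOn.add
      · exact (hexpA.clm_apply continuous_const).continuousOn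
      · exact hexpA.continuousOn.clm_apply (my_contOn_primitive h₁ hh₁c)
    apply this.congr
    intro t ht
    simp only
    rw [heq t ht]
  -- second component
  set k : ℝ → Y := fun s => NormedSpace.exp ((-s) • B) (g₁ s) with hk
  have hkc : ContinuousOn k (Set.Ici 0) := by
    apply ContinuousOn.clm_apply _ hg₁c
    exact (NormedSpace.exp_continuous.comp
      ((continuous_id.neg).smul continuous_const)).continuousOn
  have hkeq : (fun s => NormedSpace.exp (((0:ℝ) - s) • B) (g₁ s)) = k := by
    funext s; rw [zero_sub]
  have hkint : IntegrableOn k (Set.Ioi 0) := by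
    have := (my_ioi B β σ (δ * C) hσβ (mul_nonneg hδ hC) hB g₁ hg₁c hgb₁ le_rfl).1
    rwa [hkeq] at this
  set c₀ : Y := ∫ s in Set.Ioi 0, k s with hc₀
  have hsndc : ContinuousOn
      (fun t => -∫ s in Set.Ioi t, NormedSpace.exp ((t - s) • B) (g₁ s)) (Set.Ici 0) := by
    have heq : ∀ t : ℝ, 0 ≤ t →
        (∫ s in Set.Ioi t, NormedSpace.exp ((t - s) • B) (g₁ s))
          = NormedSpace.exp (t • B) (c₀ - ∫ s in (0:ℝ)..t, k s) := by
      intro t ht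
      have hkt : IntegrableOn k (Set.Ioi t) := hkint.mono_set (Set.Ioi_subset_Ioi ht)
      have h1 : (∫ s in Set.Ioi t, NormedSpace.exp ((t - s) • B) (g₁ s))
          = NormedSpace.exp (t • B) (∫ s in Set.Ioi t, k s) := by
        rw [show (fun s => NormedSpace.exp ((t - s) • B) (g₁ s))
            = fun s => NormedSpace.exp (t • B) (k s)
          from funext fun s => my_exp_split B t s _]
        exact (NormedSpace.exp (t • B)).integral_comp_comm hkt
      have h2 : (∫ s in Set.Ioi t, k s) = c₀ - ∫ s in (0:ℝ)..t, k s := by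
        have hsplit : c₀ = (∫ s in Set.Ioc 0 t, k s) + ∫ s in Set.Ioi t, k s := by
          rw [hc₀, ← MeasureTheory.setIntegral_union Set.Ioc_disjoint_Ioi_same
            measurableSet_Ioi (hkint.mono_set Set.Ioc_subset_Ioi_self) hkt,
            Set.Ioc_union_Ioi_eq_Ioi ht]
        rw [intervalIntegral.integral_of_le ht, hsplit]
        abel
      rw [h1, h2]
    have : ContinuousOn
        (fun t => -(NormedSpace.exp (t • B) (c₀ - ∫ s in (0:ℝ)..t, k s))) (Set.Ici 0) := by
      apply ContinuousOn.neg
      exact hexpB.continuousOn.clm_apply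
        (continuousOn_const.sub (my_contOn_primitive k hkc))
    apply this.congr
    intro t ht
    simp only
    rw [heq t ht]
  exact hfstc.prodMk hsndc



set_option maxHeartbeats 1000000 in
lemma my_Tdiff (A : X →L[ℝ] X) (B : Y →L[ℝ] Y) (α β δ σ κ : ℝ)
    (F : X × Y → X) (G : X × Y → Y) (z : ℝ → X × Y → X × Y) (z₀ : X × Y)
    (hA : ∀ t : ℝ, 0 ≤ t → ‖NormedSpace.exp (t • A)‖ ≤ Real.exp (α * t))
    (hB : ∀ t : ℝ, 0 ≤ t → ‖NormedSpace.exp ((-t) • B)‖ ≤ Real.exp (-(β * t)))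
    (hδ : 0 ≤ δ)
    (hF : ∀ a b : X × Y, ‖F a - F b‖ ≤ δ * ‖a - b‖)
    (hG : ∀ a b : X × Y, ‖G a - G b‖ ≤ δ * ‖a - b‖)
    (hFc : Continuous F) (hGc : Continuous G) (hzc : Continuous fun s => z s z₀)
    (hασ : α < σ) (hσβ : σ < β)
    (hκ : κ = max (δ / (β - σ)) (δ / (σ - α)))
    (φ₁ φ₂ : ℝ → X × Y) (x₁ x₂ : X) (C₁ C₂ D : ℝ)
    (h₁c : ContinuousOn φ₁ (Set.Ici 0)) (h₂c : ContinuousOn φ₂ (Set.Ici 0))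
    (hC₁ : 0 ≤ C₁) (hC₂ : 0 ≤ C₂) (hD : 0 ≤ D)
    (hb₁ : ∀ s, 0 ≤ s → ‖φ₁ s‖ ≤ C₁ * Real.exp (σ * s))
    (hb₂ : ∀ s, 0 ≤ s → ‖φ₂ s‖ ≤ C₂ * Real.exp (σ * s))
    (hdiff : ∀ s, 0 ≤ s → ‖φ₁ s - φ₂ s‖ ≤ D * Real.exp (σ * s)) :
    ∀ t, 0 ≤ t →
      ‖Tmap A B F G z z₀ φ₁ x₁ t - Tmap A B F G z z₀ φ₂ x₂ t‖
        ≤ (‖x₁ - x₂‖ + κ * D) * Real.exp (σ * t) ∧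
      ‖(Tmap A B F G z z₀ φ₁ x₁ t - Tmap A B F G z z₀ φ₂ x₂ t).2‖
        ≤ δ * D / (β - σ) * Real.exp (σ * t) := by
  intro t ht
  -- the various integrands
  set u₁ : ℝ → X := fun s => F (φ₁ s + z s z₀) - F (z s z₀) with hu₁
  set u₂ : ℝ → X := fun s => F (φ₂ s + z s z₀) - F (z s z₀) with hu₂
  set g₁ : ℝ → Y := fun s => G (φ₁ s + z s z₀) - G (z s z₀) with hg₁
  set g₂ : ℝ → Y := fun s => G (φ₂ s + z s z₀) - G (z s z₀) with hg₂
  set u : ℝ → X := fun s => F (φ₁ s + z s z₀) - F (φ₂ s + z s z₀) with hu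
  set g : ℝ → Y := fun s => G (φ₁ s + z s z₀) - G (φ₂ s + z s z₀) with hg
  have huc : ∀ (ψ : ℝ → X × Y), ContinuousOn ψ (Set.Ici 0) →
      ContinuousOn (fun s => ψ s + z s z₀) (Set.Ici 0) :=
    fun ψ hψ => hψ.add hzc.continuousOn
  have hu₁c : ContinuousOn u₁ (Set.Ici 0) :=
    (hFc.comp_continuousOn (huc φ₁ h₁c)).sub (hFc.comp_continuousOn hzc.continuousOn)
  have hu₂c : ContinuousOn u₂ (Set.Ici 0) :=
    (hFc.comp_continuousOn (huc φ₂ h₂c)).sub (hFc.comp_continuousOn hzc.continuousOn)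
  have hg₁c : ContinuousOn g₁ (Set.Ici 0) :=
    (hGc.comp_continuousOn (huc φ₁ h₁c)).sub (hGc.comp_continuousOn hzc.continuousOn)
  have hg₂c : ContinuousOn g₂ (Set.Ici 0) :=
    (hGc.comp_continuousOn (huc φ₂ h₂c)).sub (hGc.comp_continuousOn hzc.continuousOn)
  have huec : ContinuousOn u (Set.Ici 0) :=
    (hFc.comp_continuousOn (huc φ₁ h₁c)).sub (hFc.comp_continuousOn (huc φ₂ h₂c))
  have hgec : ContinuousOn g (Set.Ici 0) :=
    (hGc.comp_continuousOn (huc φ₁ h₁c)).sub (hGc.comp_continuousOn (huc φ₂ h₂c))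
  -- bounds
  have hub₁ : ∀ s, 0 ≤ s → ‖u₁ s‖ ≤ (δ * C₁) * Real.exp (σ * s) := by
    intro s hs
    calc ‖u₁ s‖ ≤ δ * ‖(φ₁ s + z s z₀) - z s z₀‖ := hF _ _
      _ = δ * ‖φ₁ s‖ := by rw [add_sub_cancel_right]
      _ ≤ δ * (C₁ * Real.exp (σ * s)) := mul_le_mul_of_nonneg_left (hb₁ s hs) hδ
      _ = (δ * C₁) * Real.exp (σ * s) := by ring
  have hub₂ : ∀ s, 0 ≤ s → ‖u₂ s‖ ≤ (δ * C₂) * Real.exp (σ * s) := by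
    intro s hs
    calc ‖u₂ s‖ ≤ δ * ‖(φ₂ s + z s z₀) - z s z₀‖ := hF _ _
      _ = δ * ‖φ₂ s‖ := by rw [add_sub_cancel_right]
      _ ≤ δ * (C₂ * Real.exp (σ * s)) := mul_le_mul_of_nonneg_left (hb₂ s hs) hδ
      _ = (δ * C₂) * Real.exp (σ * s) := by ring
  have hgb₁ : ∀ s, 0 ≤ s → ‖g₁ s‖ ≤ (δ * C₁) * Real.exp (σ * s) := by
    intro s hs
    calc ‖g₁ s‖ ≤ δ * ‖(φ₁ s + z s z₀) - z s z₀‖ := hG _ _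
      _ = δ * ‖φ₁ s‖ := by rw [add_sub_cancel_right]
      _ ≤ δ * (C₁ * Real.exp (σ * s)) := mul_le_mul_of_nonneg_left (hb₁ s hs) hδ
      _ = (δ * C₁) * Real.exp (σ * s) := by ring
  have hgb₂ : ∀ s, 0 ≤ s → ‖g₂ s‖ ≤ (δ * C₂) * Real.exp (σ * s) := by
    intro s hs
    calc ‖g₂ s‖ ≤ δ * ‖(φ₂ s + z s z₀) - z s z₀‖ := hG _ _
      _ = δ * ‖φ₂ s‖ := by rw [add_sub_cancel_right]
      _ ≤ δ * (C₂ * Real.exp (σ * s)) := mul_le_mul_of_nonneg_left (hb₂ s hs) hδ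
      _ = (δ * C₂) * Real.exp (σ * s) := by ring
  have hub : ∀ s, 0 ≤ s → ‖u s‖ ≤ (δ * D) * Real.exp (σ * s) := by
    intro s hs
    calc ‖u s‖ ≤ δ * ‖(φ₁ s + z s z₀) - (φ₂ s + z s z₀)‖ := hF _ _
      _ = δ * ‖φ₁ s - φ₂ s‖ := by rw [add_sub_add_right_eq_sub]
      _ ≤ δ * (D * Real.exp (σ * s)) := mul_le_mul_of_nonneg_left (hdiff s hs) hδ
      _ = (δ * D) * Real.exp (σ * s) := by ring
  have hgb : ∀ s, 0 ≤ s → ‖g s‖ ≤ (δ * D) * Real.exp (σ * s) := by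
    intro s hs
    calc ‖g s‖ ≤ δ * ‖(φ₁ s + z s z₀) - (φ₂ s + z s z₀)‖ := hG _ _
      _ = δ * ‖φ₁ s - φ₂ s‖ := by rw [add_sub_add_right_eq_sub]
      _ ≤ δ * (D * Real.exp (σ * s)) := mul_le_mul_of_nonneg_left (hdiff s hs) hδ
      _ = (δ * D) * Real.exp (σ * s) := by ring
  -- integrability statements
  have hI₁ := my_interval A α σ (δ * C₁) hασ (mul_nonneg hδ hC₁) hA u₁ hu₁c hub₁ ht
  have hI₂ := my_interval A α σ (δ * C₂) hασ (mul_nonneg hδ hC₂) hA u₂ hu₂c hub₂ ht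
  have hIu := my_interval A α σ (δ * D) hασ (mul_nonneg hδ hD) hA u huec hub ht
  have hJ₁ := my_ioi B β σ (δ * C₁) hσβ (mul_nonneg hδ hC₁) hB g₁ hg₁c hgb₁ ht
  have hJ₂ := my_ioi B β σ (δ * C₂) hσβ (mul_nonneg hδ hC₂) hB g₂ hg₂c hgb₂ ht
  have hJg := my_ioi B β σ (δ * D) hσβ (mul_nonneg hδ hD) hB g hgec hgb ht
  -- decompose the difference
  have hfst : (Tmap A B F G z z₀ φ₁ x₁ t - Tmap A B F G z z₀ φ₂ x₂ t).1
      = NormedSpace.exp (t • A) (x₁ - x₂)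
        + ∫ s in (0:ℝ)..t, NormedSpace.exp ((t - s) • A) (u s) := by
    show (NormedSpace.exp (t • A) x₁ + ∫ s in (0:ℝ)..t, NormedSpace.exp ((t - s) • A) (u₁ s))
        - (NormedSpace.exp (t • A) x₂ + ∫ s in (0:ℝ)..t, NormedSpace.exp ((t - s) • A) (u₂ s))
        = _
    rw [add_sub_add_comm, ← map_sub, ← intervalIntegral.integral_sub hI₁.1 hI₂.1]
    have : (fun s => NormedSpace.exp ((t - s) • A) (u₁ s)
        - NormedSpace.exp ((t - s) • A) (u₂ s))
        = fun s => NormedSpace.exp ((t - s) • A) (u s) := by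
      funext s
      rw [← map_sub]
      congr 1
      simp [hu₁, hu₂, hu]
    rw [this]
  have hsnd : (Tmap A B F G z z₀ φ₁ x₁ t - Tmap A B F G z z₀ φ₂ x₂ t).2
      = -∫ s in Set.Ioi t, NormedSpace.exp ((t - s) • B) (g s) := by
    show (-∫ s in Set.Ioi t, NormedSpace.exp ((t - s) • B) (g₁ s))
        - (-∫ s in Set.Ioi t, NormedSpace.exp ((t - s) • B) (g₂ s)) = _
    rw [neg_sub_neg, ← neg_sub, ← MeasureTheory.integral_sub hJ₁.1 hJ₂.1]
    have : (fun s => NormedSpace.exp ((t - s) • B) (g₁ s)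
        - NormedSpace.exp ((t - s) • B) (g₂ s))
        = fun s => NormedSpace.exp ((t - s) • B) (g s) := by
      funext s
      rw [← map_sub]
      congr 1
      simp [hg₁, hg₂, hg]
    rw [this]
  -- final estimates
  have hκ1 : δ / (σ - α) ≤ κ := hκ ▸ le_max_right _ _
  have hκ2 : δ / (β - σ) ≤ κ := hκ ▸ le_max_left _ _
  have hκD1 : δ * D / (σ - α) ≤ κ * D := by
    rw [show δ * D / (σ - α) = (δ / (σ - α)) * D by ring]
    exact mul_le_mul_of_nonneg_right hκ1 hD
  have hκD2 : δ * D / (β - σ) ≤ κ * D := by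
    rw [show δ * D / (β - σ) = (δ / (β - σ)) * D by ring]
    exact mul_le_mul_of_nonneg_right hκ2 hD
  have hexpσ : Real.exp (α * t) ≤ Real.exp (σ * t) :=
    Real.exp_le_exp.mpr (mul_le_mul_of_nonneg_right (le_of_lt hασ) ht)
  have hexp0 : (0:ℝ) ≤ Real.exp (σ * t) := Real.exp_nonneg _
  have hx0 : (0:ℝ) ≤ ‖x₁ - x₂‖ := norm_nonneg _
  have hsndbd : ‖(Tmap A B F G z z₀ φ₁ x₁ t - Tmap A B F G z z₀ φ₂ x₂ t).2‖
      ≤ δ * D / (β - σ) * Real.exp (σ * t) := by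
    rw [hsnd, norm_neg]
    exact hJg.2
  refine ⟨norm_prod_le_iff.mpr ⟨?_, ?_⟩, hsndbd⟩
  · rw [hfst]
    calc ‖NormedSpace.exp (t • A) (x₁ - x₂)
          + ∫ s in (0:ℝ)..t, NormedSpace.exp ((t - s) • A) (u s)‖
        ≤ ‖NormedSpace.exp (t • A) (x₁ - x₂)‖
          + ‖∫ s in (0:ℝ)..t, NormedSpace.exp ((t - s) • A) (u s)‖ := norm_add_le _ _
      _ ≤ Real.exp (α * t) * ‖x₁ - x₂‖ + δ * D / (σ - α) * Real.exp (σ * t) := by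
          apply add_le_add _ hIu.2
          exact le_trans (ContinuousLinearMap.le_opNorm _ _)
            (mul_le_mul_of_nonneg_right (hA t ht) hx0)
      _ ≤ (‖x₁ - x₂‖ + κ * D) * Real.exp (σ * t) := by
          nlinarith [mul_le_mul_of_nonneg_right hexpσ hx0,
            mul_le_mul_of_nonneg_right hκD1 hexp0]
  · refine le_trans hsndbd ?_
    nlinarith [mul_le_mul_of_nonneg_right hκD2 hexp0]

end AuxLemmas

/-- **Lipschitz bound for the approximate stable-leaf maps Φ^j.** -/
theorem approximate_stable_leaf_lipschitz
    {X Y : Type*} [NormedAddCommGroup X] [NormedSpace ℝ X] [CompleteSpace X]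
    [NormedAddCommGroup Y] [NormedSpace ℝ Y] [CompleteSpace Y]
(A : X →L[ℝ] X) (B : Y →L[ℝ] Y) (α β δ σ κ : ℝ)
    (F : X × Y → X) (G : X × Y → Y)
    (z : ℝ → X × Y → X × Y) (z₀ : X × Y)
    (hA : ∀ t : ℝ, 0 ≤ t → ‖NormedSpace.exp (t • A)‖ ≤ Real.exp (α * t))
    (hB : ∀ t : ℝ, 0 ≤ t → ‖NormedSpace.exp ((-t) • B)‖ ≤ Real.exp (-(β * t)))
    (hδ : 0 ≤ δ)
    (hLip : ∀ w₁ w₂ : X × Y, ‖((F w₁, G w₁) : X × Y) - (F w₂, G w₂)‖ ≤ δ * ‖w₁ - w₂‖)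
    (hH0 : ((F 0, G 0) : X × Y) = 0)
    (hgap : 2 * δ < β - α)
    (hz0 : ∀ w : X × Y, z 0 w = w)
    (hode : ∀ (w : X × Y) (t : ℝ),
      HasDerivAt (fun τ => z τ w)
        (((A (z t w).1, B (z t w).2) : X × Y) + (F (z t w), G (z t w))) t)
    (hσ : σ ∈ Set.Ioo (α + δ) (β - δ))
    (hκ : κ = max (δ / (β - σ)) (δ / (σ - α))) :
    ∀ j : ℕ, 1 ≤ j → ∀ x₁ x₂ : X,
      ‖(z₀.2 + (phiIter A B F G z z₀ α j x₁ 0).2)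
          - (z₀.2 + (phiIter A B F G z z₀ α j x₂ 0).2)‖
        ≤ δ / (β - σ) * (1 / (1 - κ)) * ‖x₁ - x₂‖ := by
  -- basic facts
  have hσα : α < σ := by have := hσ.1; linarith
  have hσβ : σ < β := by have := hσ.2; linarith
  have hβσ : (0:ℝ) < β - σ := by linarith
  have hσα' : (0:ℝ) < σ - α := by linarith
  have hF : ∀ a b : X × Y, ‖F a - F b‖ ≤ δ * ‖a - b‖ := by
    intro a b
    have h1 : F a - F b = (((F a, G a) : X × Y) - (F b, G b)).1 := rfl
    rw [h1]
    exact le_trans (norm_fst_le _) (hLip a b)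
  have hG : ∀ a b : X × Y, ‖G a - G b‖ ≤ δ * ‖a - b‖ := by
    intro a b
    have h1 : G a - G b = (((F a, G a) : X × Y) - (F b, G b)).2 := rfl
    rw [h1]
    exact le_trans (norm_snd_le _) (hLip a b)
  have hHc : Continuous fun w : X × Y => ((F w, G w) : X × Y) := by
    have : LipschitzWith ⟨δ, hδ⟩ (fun w : X × Y => ((F w, G w) : X × Y)) := by
      apply LipschitzWith.of_dist_le_mul
      intro a b
      rw [dist_eq_norm, dist_eq_norm]
      exact hLip a b
    exact this.continuous
  have hFc : Continuous F := continuous_fst.comp hHc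
  have hGc : Continuous G := continuous_snd.comp hHc
  have hzc : Continuous fun s => z s z₀ :=
    continuous_iff_continuousAt.mpr fun t => (hode z₀ t).continuousAt
  have hκ0 : 0 ≤ κ := by
    rw [hκ]
    exact le_trans (div_nonneg hδ (le_of_lt hβσ)) (le_max_left _ _)
  have hκ1 : κ < 1 := by
    rw [hκ]
    apply max_lt
    · rw [div_lt_one hβσ]; have := hσ.2; linarith
    · rw [div_lt_one hσα']; have := hσ.1; linarith
  have h1κ : (0:ℝ) < 1 - κ := by linarith
  -- the invariant: continuity and exponential growth bound of the iterates
  have hInv : ∀ (j : ℕ) (x : X),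
      ContinuousOn (phiIter A B F G z z₀ α j x) (Set.Ici 0) ∧
      ∃ C, 0 ≤ C ∧ ∀ s, 0 ≤ s →
        ‖phiIter A B F G z z₀ α j x s‖ ≤ C * Real.exp (σ * s) := by
    intro j
    induction j with
    | zero =>
      intro x
      constructor
      · apply Continuous.continuousOn
        exact ((Real.continuous_exp.comp (continuous_const.mul continuous_id)).smul
          continuous_const).prodMk continuous_const
      · refine ⟨‖x - z₀.1‖, norm_nonneg _, ?_⟩
        intro s hs
        show ‖(Real.exp (α * s) • (x - z₀.1), (0:Y))‖ ≤ _
        apply norm_prod_le_iff.mpr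
        constructor
        · rw [norm_smul, Real.norm_eq_abs, abs_of_pos (Real.exp_pos _)]
          rw [mul_comm (‖x - z₀.1‖)]
          apply mul_le_mul_of_nonneg_right _ (norm_nonneg _)
          exact Real.exp_le_exp.mpr (mul_le_mul_of_nonneg_right (le_of_lt hσα) hs)
        · simp
          positivity
    | succ j ih =>
      intro x
      obtain ⟨hc, C, hC0, hCb⟩ := ih x
      constructor
      · show ContinuousOn (fun t => Tmap A B F G z z₀ (phiIter A B F G z z₀ α j x) x t)
          (Set.Ici 0)
        exact my_Tcont A B β σ δ C F G z z₀ _ x hσβ hC0 hδ hB hG hFc hGc hzc hc hCb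
      · refine ⟨‖x‖ + κ * C, by positivity, ?_⟩
        intro s hs
        have h0c : ContinuousOn (fun _ : ℝ => (0 : X × Y)) (Set.Ici 0) := continuousOn_const
        have h0b : ∀ s, (0:ℝ) ≤ s → ‖(0 : X × Y)‖ ≤ 0 * Real.exp (σ * s) := by simp
        have hdiff : ∀ s, (0:ℝ) ≤ s →
            ‖phiIter A B F G z z₀ α j x s - 0‖ ≤ C * Real.exp (σ * s) := by
          intro s hs; rw [sub_zero]; exact hCb s hs
        have := (my_Tdiff A B α β δ σ κ F G z z₀ hA hB hδ hF hG hFc hGc hzc hσα hσβ hκ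
          (phiIter A B F G z z₀ α j x) (fun _ => 0) x 0 C 0 C hc h0c hC0 le_rfl hC0
          hCb h0b hdiff s hs).1
        rw [my_Tmap_zero, sub_zero, sub_zero] at this
        exact this
  -- the Lipschitz estimate for differences of iterates
  intro j hj x₁ x₂
  set L : ℝ := ‖x₁ - x₂‖ * (1 / (1 - κ)) with hL
  have hL0 : 0 ≤ L := by positivity
  have hLfix : ‖x₁ - x₂‖ + κ * L = L := by
    rw [hL]
    field_simp
    ring
  have hxL : ‖x₁ - x₂‖ ≤ L := by nlinarith [norm_nonneg (x₁ - x₂)]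
  have hDiff : ∀ (j : ℕ), ∀ s, 0 ≤ s →
      ‖phiIter A B F G z z₀ α j x₁ s - phiIter A B F G z z₀ α j x₂ s‖
        ≤ L * Real.exp (σ * s) := by
    intro j
    induction j with
    | zero =>
      intro s hs
      show ‖(Real.exp (α * s) • (x₁ - z₀.1), (0:Y))
        - (Real.exp (α * s) • (x₂ - z₀.1), (0:Y))‖ ≤ _
      rw [Prod.mk_sub_mk, ← smul_sub, sub_zero,
        show x₁ - z₀.1 - (x₂ - z₀.1) = x₁ - x₂ by abel]
      apply norm_prod_le_iff.mpr
      constructor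
      · rw [norm_smul, Real.norm_eq_abs, abs_of_pos (Real.exp_pos _)]
        calc Real.exp (α * s) * ‖x₁ - x₂‖ ≤ Real.exp (σ * s) * ‖x₁ - x₂‖ :=
              mul_le_mul_of_nonneg_right
                (Real.exp_le_exp.mpr (mul_le_mul_of_nonneg_right (le_of_lt hσα) hs))
                (norm_nonneg _)
          _ ≤ Real.exp (σ * s) * L := mul_le_mul_of_nonneg_left hxL (Real.exp_nonneg _)
          _ = L * Real.exp (σ * s) := by ring
      · simp
        positivity
    | succ j ih =>
      intro s hs
      obtain ⟨hc₁, C₁, hC₁0, hC₁b⟩ := hInv j x₁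
      obtain ⟨hc₂, C₂, hC₂0, hC₂b⟩ := hInv j x₂
      have := (my_Tdiff A B α β δ σ κ F G z z₀ hA hB hδ hF hG hFc hGc hzc hσα hσβ hκ
        (phiIter A B F G z z₀ α j x₁) (phiIter A B F G z z₀ α j x₂) x₁ x₂ C₁ C₂ L
        hc₁ hc₂ hC₁0 hC₂0 hL0 hC₁b hC₂b ih s hs).1
      refine le_trans this ?_
      rw [hLfix]
  -- conclude
  obtain ⟨m, rfl⟩ : ∃ m, j = m + 1 := ⟨j - 1, by omega⟩
  obtain ⟨hc₁, C₁, hC₁0, hC₁b⟩ := hInv m x₁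
  obtain ⟨hc₂, C₂, hC₂0, hC₂b⟩ := hInv m x₂
  have hkey := (my_Tdiff A B α β δ σ κ F G z z₀ hA hB hδ hF hG hFc hGc hzc hσα hσβ hκ
    (phiIter A B F G z z₀ α m x₁) (phiIter A B F G z z₀ α m x₂) x₁ x₂ C₁ C₂ L
    hc₁ hc₂ hC₁0 hC₂0 hL0 hC₁b hC₂b (hDiff m) 0 le_rfl).2
  rw [add_sub_add_left_eq_sub]
  have hgoal : phiIter A B F G z z₀ α (m+1) x₁ 0
      = Tmap A B F G z z₀ (phiIter A B F G z z₀ α m x₁) x₁ 0 := rfl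
  have hgoal2 : phiIter A B F G z z₀ α (m+1) x₂ 0
      = Tmap A B F G z z₀ (phiIter A B F G z z₀ α m x₂) x₂ 0 := rfl
  rw [hgoal, hgoal2, show
    (Tmap A B F G z z₀ (phiIter A B F G z z₀ α m x₁) x₁ 0).2
      - (Tmap A B F G z z₀ (phiIter A B F G z z₀ α m x₂) x₂ 0).2
    = (Tmap A B F G z z₀ (phiIter A B F G z z₀ α m x₁) x₁ 0
      - Tmap A B F G z z₀ (phiIter A B F G z z₀ α m x₂) x₂ 0).2 from rfl]
  refine le_trans hkey ?_
  rw [mul_zero, Real.exp_zero, mul_one, hL]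
  rw [show δ * (‖x₁ - x₂‖ * (1 / (1 - κ))) / (β - σ)
    = δ / (β - σ) * (1 / (1 - κ)) * ‖x₁ - x₂‖ by ring]
end
end
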